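/- arXiv:math-ph/9910034 — 5 statements merged into one kernel-verified Lean document; each statement's English description precedes it below -/
import Mathlib

section
/- Let η ∈ ℝ and let N : ℝ → ℝ be nondecreasing and right-continuous with N(E) = 0 for all E ≤ η and N not identically zero, with associated Lebesgue–Stieltjes measure μ_N and shifted Laplace–Stieltjes transform Ñ(t) := ∫_{(η,∞)} e^{−t(E−η)} dμ_N(E). Assume Ñ(τ) < ∞ for some τ > 0, and let (f, f#) be a de Bruijn conjugate pair of slowly varying functions. Then lim_{t→∞} f(t) · log Ñ(t) = −1 if and only if lim_{E↓0} (log N(η+E)) / f#(1/E) = −1. -/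
open MeasureTheory Filter Real

set_option maxHeartbeats 1000000

noncomputable section


/-- Uniform convergence theorem (measurable case), additive form. -/
lemma uct_aux (h : ℝ → ℝ) (hm : Measurable h)
    (hs : ∀ u : ℝ, Tendsto (fun x => h (x + u) - h x) atTop (nhds 0))
    {ε : ℝ} (hε : 0 < ε) :
    ∀ᶠ x in atTop, ∀ u ∈ Set.Icc (0:ℝ) 1, |h (x + u) - h x| ≤ ε := by
  by_contra hcon
  rw [Filter.not_eventually] at hcon
  have hseq : ∀ n : ℕ, ∃ x : ℝ, (n : ℝ) ≤ x ∧ ∃ u, u ∈ Set.Icc (0:ℝ) 1 ∧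
      ε < |h (x + u) - h x| := by
    intro n
    rcases (hcon.and_eventually (eventually_ge_atTop (n : ℝ))).exists with ⟨x, hx1, hx2⟩
    push_neg at hx1
    obtain ⟨u, hu, hu2⟩ := hx1
    exact ⟨x, hx2, u, hu, hu2⟩
  choose x hxge u hu hbig using hseq
  have hxtop : Tendsto x atTop atTop :=
    tendsto_atTop_mono hxge tendsto_natCast_atTop_atTop
  have hytop : Tendsto (fun n => x n + u n) atTop atTop :=
    tendsto_atTop_mono (fun n => le_add_of_nonneg_right (hu n).1) hxtop
  have hmeasfun : ∀ c d : ℝ, Measurable fun v : ℝ => |h (c + v) - h d| := fun c d =>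
    ((hm.comp (measurable_const.add measurable_id)).sub measurable_const).abs
  -- generic convergence to zero of measures of bad sets along points tending to infinity
  have hgen : ∀ (y : ℕ → ℝ) (a : ℝ), Tendsto y atTop atTop →
      Tendsto (fun n => volume (Set.Icc (a:ℝ) 2 ∩
        (fun v => |h (y n + v) - h (y n)|) ⁻¹' Set.Ici (ε/2))) atTop (nhds 0) := by
    intro y a hy
    have := tendsto_measure_of_tendsto_indicator (A := (∅ : Set ℝ)) (atTop : Filter ℕ)
      (μ := volume)
      (As := fun n => Set.Icc (a:ℝ) 2 ∩ (fun v => |h (y n + v) - h (y n)|) ⁻¹' Set.Ici (ε/2))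
      (fun n => measurableSet_Icc.inter ((hmeasfun _ _) measurableSet_Ici))
      (B := Set.Icc (a:ℝ) 2) measurableSet_Icc (by simp)
      (Eventually.of_forall fun n => Set.inter_subset_left) ?_
    · simpa using this
    · intro v
      simp only [Set.mem_empty_iff_false, iff_false]
      have hv : Tendsto (fun n => h (y n + v) - h (y n)) atTop (nhds 0) :=
        ((hs v).comp hy).congr (fun n => rfl)
      have : ∀ᶠ n in atTop, |h (y n + v) - h (y n)| < ε/2 := by
        have := hv.abs
        rw [abs_zero] at this
        exact this.eventually_lt_const (by linarith)
      filter_upwards [this] with n hn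
      intro hmem
      rcases hmem with ⟨-, h2⟩
      simp only [Set.mem_preimage, Set.mem_Ici] at h2
      linarith
  have hAto := hgen x 0 hxtop
  have hA'to := hgen (fun n => x n + u n) (-1) hytop
  -- B n has measure at most that of A' n (translation)
  set A : ℕ → Set ℝ := fun n =>
    Set.Icc (0:ℝ) 2 ∩ (fun v => |h (x n + v) - h (x n)|) ⁻¹' Set.Ici (ε/2) with hA
  set A' : ℕ → Set ℝ := fun n =>
    Set.Icc (-1:ℝ) 2 ∩ (fun v => |h (x n + u n + v) - h (x n + u n)|) ⁻¹' Set.Ici (ε/2)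
    with hA'
  set B : ℕ → Set ℝ := fun n =>
    Set.Icc (0:ℝ) 2 ∩ (fun v => |h (x n + v) - h (x n + u n)|) ⁻¹' Set.Ici (ε/2) with hB
  have hBsub : ∀ n, B n ⊆ (fun v : ℝ => v + (- u n)) ⁻¹' A' n := by
    intro n v hv
    rcases hv with ⟨hv1, hv2⟩
    simp only [Set.mem_preimage, Set.mem_Ici] at hv2 ⊢
    constructor
    · rcases hv1 with ⟨h01, h02⟩
      rcases hu n with ⟨hu1, hu2⟩
      constructor <;> simp <;> linarith
    · simp only [Set.mem_preimage, Set.mem_Ici]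
      have : x n + u n + (v + -u n) = x n + v := by ring
      rw [this]
      exact hv2
  have hBle : ∀ n, volume (B n) ≤ volume (A' n) := by
    intro n
    calc volume (B n) ≤ volume ((fun v : ℝ => v + (- u n)) ⁻¹' A' n) :=
          measure_mono (hBsub n)
      _ = volume (A' n) := measure_preimage_add_right _ _ _
  have hBto : Tendsto (fun n => volume (B n)) atTop (nhds 0) := by
    have h0 : Tendsto (fun _ : ℕ => (0:ENNReal)) atTop (nhds 0) := tendsto_const_nhds
    exact tendsto_of_tendsto_of_tendsto_of_le_of_le h0 hA'to (fun n => zero_le) hBle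
  -- cover
  have hcover : ∀ n, Set.Icc (0:ℝ) 2 ⊆ A n ∪ B n := by
    intro n v hv
    by_contra hvn
    simp only [Set.mem_union] at hvn
    push_neg at hvn
    obtain ⟨h1, h2⟩ := hvn
    have e1 : |h (x n + v) - h (x n)| < ε/2 := by
      by_contra hc
      exact h1 ⟨hv, by simp only [Set.mem_preimage, Set.mem_Ici]; linarith⟩
    have e2 : |h (x n + v) - h (x n + u n)| < ε/2 := by
      by_contra hc
      exact h2 ⟨hv, by simp only [Set.mem_preimage, Set.mem_Ici]; linarith⟩
    have := hbig n
    have htri : |h (x n + u n) - h (x n)| ≤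
        |h (x n + v) - h (x n)| + |h (x n + v) - h (x n + u n)| := by
      have heq : h (x n + u n) - h (x n)
          = (h (x n + v) - h (x n)) - (h (x n + v) - h (x n + u n)) := by ring
      rw [heq]
      exact abs_sub _ _
    linarith
  have hlow : ∀ n, (volume (Set.Icc (0:ℝ) 2)) ≤ volume (A n) + volume (B n) := fun n =>
    (measure_mono (hcover n)).trans (measure_union_le _ _)
  have hsum : Tendsto (fun n => volume (A n) + volume (B n)) atTop (nhds 0) := by
    simpa using hAto.add hBto
  have hlt : ∀ᶠ n in atTop, volume (A n) + volume (B n) < volume (Set.Icc (0:ℝ) 2) := by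
    apply hsum.eventually_lt_const
    rw [Real.volume_Icc]
    norm_num
  rcases hlt.exists with ⟨n, hn⟩
  exact absurd (hlow n) (not_le.mpr hn)


lemma sublinear_aux (h : ℝ → ℝ) (hm : Measurable h)
    (hs : ∀ u : ℝ, Tendsto (fun x => h (x + u) - h x) atTop (nhds 0)) :
    Tendsto (fun x => h x / x) atTop (nhds 0) := by
  rw [Metric.tendsto_nhds]
  intro δ hδ
  set ε := δ/3 with hε
  have hεpos : 0 < ε := by positivity
  obtain ⟨X₀, hX₀⟩ := eventually_atTop.mp (uct_aux h hm hs hεpos)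
  set X := max X₀ 0 with hX
  have hXprop : ∀ x ≥ X, ∀ u ∈ Set.Icc (0:ℝ) 1, |h (x + u) - h x| ≤ ε := by
    intro x hx
    exact hX₀ x (le_trans (le_max_left _ _) hx)
  have key : ∀ n : ℕ, ∀ x : ℝ, X ≤ x → x ≤ X + n + 1 → |h x - h X| ≤ ε * (n + 1) := by
    intro n
    induction n with
    | zero =>
      intro x hx1 hx2
      have hu : x - X ∈ Set.Icc (0:ℝ) 1 := ⟨by linarith, by push_cast at hx2; linarith⟩
      have := hXprop X le_rfl (x - X) hu
      rw [add_sub_cancel] at this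
      simpa using this
    | succ n ih =>
      intro x hx1 hx2
      by_cases hcase : x ≤ X + n + 1
      · have := ih x hx1 hcase
        have : ε * (n+1) ≤ ε * (n+1+1) := by nlinarith
        have := ih x hx1 hcase
        push_cast
        push_cast at this
        nlinarith
      · push_neg at hcase
        have hx1' : X ≤ x - 1 := by push_cast at hcase; linarith
        have hx2' : x - 1 ≤ X + n + 1 := by push_cast at hx2 ⊢; linarith
        have h1 := ih (x-1) hx1' hx2'
        have h2 := hXprop (x-1) hx1' 1 ⟨zero_le_one, le_rfl⟩
        rw [sub_add_cancel] at h2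
        have : |h x - h X| ≤ |h x - h (x-1)| + |h (x-1) - h X| := by
          have heq : h x - h X = (h x - h (x-1)) + (h (x-1) - h X) := by ring
          rw [heq]; exact abs_add_le _ _
        push_cast
        push_cast at h1
        linarith
  have hbound : ∀ x : ℝ, X ≤ x → |h x| ≤ |h X| + ε * (x - X + 1) := by
    intro x hx
    set n := ⌊x - X⌋₊ with hn
    have hn1 : (n : ℝ) ≤ x - X := Nat.floor_le (by linarith)
    have hn2 : x - X < n + 1 := Nat.lt_floor_add_one _
    have hkey := key n x hx (by linarith)
    have habs : |h x| ≤ |h X| + |h x - h X| := by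
      have heq : h x = h X + (h x - h X) := by ring
      calc |h x| = |h X + (h x - h X)| := by rw [← heq]
        _ ≤ |h X| + |h x - h X| := abs_add_le _ _
    have hmono : ε * ((n:ℝ) + 1) ≤ ε * (x - X + 1) := by nlinarith
    linarith
  have hXnn : (0:ℝ) ≤ X := le_max_right _ _
  filter_upwards [eventually_ge_atTop (max X (max 1 ((|h X| + ε)/ε)))] with x hx
  have hx1 : X ≤ x := le_trans (le_max_left _ _) hx
  have hx2 : (1:ℝ) ≤ x := le_trans (le_trans (le_max_left _ _) (le_max_right _ _)) hx
  have hx3 : (|h X| + ε)/ε ≤ x := le_trans (le_trans (le_max_right _ _) (le_max_right _ _)) hx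
  have hxpos : (0:ℝ) < x := by linarith
  rw [Real.dist_eq, sub_zero, abs_div, abs_of_pos hxpos]
  rw [div_lt_iff₀ hxpos]
  have hb := hbound x hx1
  have h1 : ε * (x - X + 1) ≤ ε * x + ε := by nlinarith
  have h2 : |h X| + ε ≤ ε * x := by
    rw [div_le_iff₀ hεpos] at hx3
    linarith
  calc |h x| ≤ |h X| + ε * (x - X + 1) := hb
    _ ≤ |h X| + ε + ε * x := by linarith
    _ ≤ ε * x + ε * x := by linarith
    _ < δ * x := by rw [hε]; nlinarith

lemma slow_mul_atTop (f : ℝ → ℝ) (hpos : ∀ t > 0, 0 < f t) (hmeas : Measurable f)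
    (hslow : ∀ c > 0, Tendsto (fun t => f (c * t) / f t) atTop (nhds 1)) :
    Tendsto (fun t => t * f t) atTop atTop := by
  set h : ℝ → ℝ := fun x => Real.log (f (Real.exp x)) with hh
  have hm : Measurable h := Real.measurable_log.comp (hmeas.comp Real.measurable_exp)
  have hs : ∀ u : ℝ, Tendsto (fun x => h (x + u) - h x) atTop (nhds 0) := by
    intro u
    have h1 := (hslow (Real.exp u) (Real.exp_pos u)).comp Real.tendsto_exp_atTop
    have h2 := ((Real.continuousAt_log one_ne_zero).tendsto).comp h1
    rw [Real.log_one] at h2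
    refine h2.congr fun x => ?_
    show Real.log (f (Real.exp u * Real.exp x) / f (Real.exp x)) = h (x + u) - h x
    rw [Real.log_div (ne_of_gt (hpos _ (by positivity))) (ne_of_gt (hpos _ (Real.exp_pos x)))]
    simp only [hh, ← Real.exp_add]
    rw [add_comm u x]
  have hsub := sublinear_aux h hm hs
  have hlin : Tendsto (fun x => x + h x) atTop atTop := by
    have h1 : Tendsto (fun x : ℝ => x * (1 + h x / x)) atTop atTop := by
      apply Filter.Tendsto.atTop_mul_pos (C := 1) one_pos tendsto_id
      simpa using (tendsto_const_nhds (x := (1:ℝ)) (f := atTop)).add hsub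
    apply h1.congr'
    filter_upwards [eventually_ge_atTop (1:ℝ)] with x hx
    have hx0 : x ≠ 0 := by linarith
    field_simp
  have hexp : Tendsto (fun t => Real.exp (Real.log t + h (Real.log t))) atTop atTop :=
    Real.tendsto_exp_atTop.comp (hlin.comp Real.tendsto_log_atTop)
  apply hexp.congr'
  filter_upwards [eventually_ge_atTop (1:ℝ)] with t ht
  have htpos : (0:ℝ) < t := by linarith
  simp only [hh]
  rw [Real.exp_log htpos] at *
  rw [Real.exp_add, Real.exp_log htpos, Real.exp_log (hpos t htpos)]


/-- Tauberian theorem of exponential type, boundary case `γ = 0`: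
`lim_{t→∞} f(t) log Ñ(t) = -1` iff `lim_{E↓0} log N(η+E)/f#(1/E) = -1`. -/
theorem stmt_12
    (η : ℝ) (N : StieltjesFunction ℝ)
    (hN0 : ∀ E ≤ η, N E = 0)
    (hNne : ∃ E, N E ≠ 0)
    (hfin : ∃ τ > 0,
      (∫⁻ E in Set.Ioi η, ENNReal.ofReal (Real.exp (-τ * (E - η))) ∂N.measure) < ⊤)
    (f fs : ℝ → ℝ)
    (hfpos : ∀ t > 0, 0 < f t) (hfspos : ∀ t > 0, 0 < fs t)
    (hfmeas : Measurable f) (hfsmeas : Measurable fs)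
    (hfslow : ∀ c > 0, Tendsto (fun t : ℝ => f (c * t) / f t) atTop (nhds 1))
    (hfsslow : ∀ c > 0, Tendsto (fun t : ℝ => fs (c * t) / fs t) atTop (nhds 1))
    (hconj1 : Tendsto (fun t : ℝ => f t * fs (t * f t)) atTop (nhds 1))
    (hconj2 : Tendsto (fun t : ℝ => fs t * f (t * fs t)) atTop (nhds 1)) :
    Tendsto (fun t : ℝ =>
        f t * Real.log (∫ E in Set.Ioi η, Real.exp (-t * (E - η)) ∂N.measure))
        atTop (nhds (-1)) ↔
      Tendsto (fun E : ℝ => Real.log (N (η + E)) / fs (1 / E))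
        (nhdsWithin 0 (Set.Ioi 0)) (nhds (-1)) := by
  obtain ⟨τ, hτ, hfinτ⟩ := hfin
  set Nt : ℝ → ℝ := fun t => ∫ E in Set.Ioi η, Real.exp (-t * (E - η)) ∂N.measure with hNtdef
  show Tendsto (fun t => f t * Real.log (Nt t)) atTop (nhds (-1)) ↔ _
  -- basic facts about N
  have hNη : N η = 0 := hN0 η le_rfl
  have hMnn : ∀ E : ℝ, 0 ≤ N (η + E) := by
    intro E
    rcases le_or_gt E 0 with hE | hE
    · rw [hN0 (η + E) (by linarith)]
    · rw [← hNη]; exact N.mono (by linarith)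
  have hμIoc : ∀ E : ℝ, N.measure (Set.Ioc η (η + E)) = ENNReal.ofReal (N (η + E)) := by
    intro E
    rw [StieltjesFunction.measure_Ioc, hNη, sub_zero]
  -- integrability
  have hmeasInt : ∀ t : ℝ, Measurable fun E : ℝ => Real.exp (-t * (E - η)) := fun t =>
    Real.measurable_exp.comp ((measurable_id.sub_const η).const_mul (-t))
  have hintτ : IntegrableOn (fun E => Real.exp (-τ * (E - η))) (Set.Ioi η) N.measure := by
    refine ⟨(hmeasInt τ).aestronglyMeasurable, ?_⟩
    rw [hasFiniteIntegral_iff_ofReal (ae_of_all _ fun E => (Real.exp_pos _).le)]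
    exact hfinτ
  have hint : ∀ t, τ ≤ t → IntegrableOn (fun E => Real.exp (-t * (E - η)))
      (Set.Ioi η) N.measure := by
    intro t ht
    refine Integrable.mono hintτ (hmeasInt t).aestronglyMeasurable ?_
    refine (ae_restrict_iff' measurableSet_Ioi).2 (ae_of_all _ fun E hE => ?_)
    rw [Set.mem_Ioi] at hE
    rw [Real.norm_eq_abs, abs_of_pos (Real.exp_pos _), Real.norm_eq_abs,
      abs_of_pos (Real.exp_pos _)]
    apply Real.exp_le_exp.2
    nlinarith
  -- Chernoff lower bound
  have chern : ∀ t, τ ≤ t → ∀ E > 0, Real.exp (-t * E) * N (η + E) ≤ Nt t := by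
    intro t ht E hE
    have h1 : Set.Ioc η (η + E) ⊆ Set.Ioi η := Set.Ioc_subset_Ioi_self
    have hi := hint t ht
    have hμlt : N.measure (Set.Ioc η (η + E)) < ⊤ := by
      rw [hμIoc]; exact ENNReal.ofReal_lt_top
    have hconst : IntegrableOn (fun _ : ℝ => Real.exp (-t * E)) (Set.Ioc η (η + E))
        N.measure := integrableOn_const hμlt.ne
    have step1 : Real.exp (-t * E) * N (η + E)
        = ∫ _ in Set.Ioc η (η + E), Real.exp (-t * E) ∂N.measure := by
      rw [setIntegral_const, measureReal_def, hμIoc, smul_eq_mul, ENNReal.toReal_ofReal (hMnn E), mul_comm]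
    have step2 : (∫ _ in Set.Ioc η (η + E), Real.exp (-t * E) ∂N.measure)
        ≤ ∫ s in Set.Ioc η (η + E), Real.exp (-t * (s - η)) ∂N.measure := by
      refine setIntegral_mono_on hconst (hi.mono_set h1) measurableSet_Ioc fun s hs => ?_
      rcases hs with ⟨hs1, hs2⟩
      apply Real.exp_le_exp.2
      have htpos : 0 < t := lt_of_lt_of_le hτ ht
      nlinarith
    have step3 : (∫ s in Set.Ioc η (η + E), Real.exp (-t * (s - η)) ∂N.measure) ≤ Nt t := by
      refine setIntegral_mono_set hi (ae_of_all _ fun s => (Real.exp_pos _).le)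
        (HasSubset.Subset.eventuallyLE h1)
    linarith
  -- splitting upper bound
  have split : ∀ t, τ ≤ t → ∀ E > 0,
      Nt t ≤ N (η + E) + Real.exp (-(t - τ) * E) * Nt τ := by
    intro t ht E hE
    have hunion : Set.Ioc η (η + E) ∪ Set.Ioi (η + E) = Set.Ioi η :=
      Set.Ioc_union_Ioi_eq_Ioi (by linarith)
    have hdisj : Disjoint (Set.Ioc η (η + E)) (Set.Ioi (η + E)) :=
      Set.Ioc_disjoint_Ioi le_rfl
    have hi := hint t ht
    have hi1 : IntegrableOn (fun s => Real.exp (-t * (s - η))) (Set.Ioc η (η + E)) N.measure :=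
      hi.mono_set Set.Ioc_subset_Ioi_self
    have hi2 : IntegrableOn (fun s => Real.exp (-t * (s - η))) (Set.Ioi (η + E)) N.measure :=
      hi.mono_set (Set.Ioi_subset_Ioi (by linarith))
    have hsplit : Nt t = (∫ s in Set.Ioc η (η + E), Real.exp (-t * (s - η)) ∂N.measure)
        + ∫ s in Set.Ioi (η + E), Real.exp (-t * (s - η)) ∂N.measure := by
      rw [hNtdef]
      simp only
      rw [← hunion, setIntegral_union hdisj measurableSet_Ioi hi1 hi2]
    have hμlt : N.measure (Set.Ioc η (η + E)) < ⊤ := by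
      rw [hμIoc]; exact ENNReal.ofReal_lt_top
    have bound1 : (∫ s in Set.Ioc η (η + E), Real.exp (-t * (s - η)) ∂N.measure)
        ≤ N (η + E) := by
      have h1 : (∫ s in Set.Ioc η (η + E), Real.exp (-t * (s - η)) ∂N.measure)
          ≤ ∫ _ in Set.Ioc η (η + E), (1:ℝ) ∂N.measure := by
        refine setIntegral_mono_on hi1 (integrableOn_const hμlt.ne)
          measurableSet_Ioc fun s hs => ?_
        rcases hs with ⟨hs1, hs2⟩
        have htpos : 0 < t := lt_of_lt_of_le hτ ht
        calc Real.exp (-t * (s - η)) ≤ Real.exp 0 := Real.exp_le_exp.2 (by nlinarith)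
          _ = 1 := Real.exp_zero
      rw [setIntegral_const, measureReal_def, hμIoc, smul_eq_mul, ENNReal.toReal_ofReal (hMnn E), mul_one] at h1
      exact h1
    have bound2 : (∫ s in Set.Ioi (η + E), Real.exp (-t * (s - η)) ∂N.measure)
        ≤ Real.exp (-(t - τ) * E) * Nt τ := by
      have h1 : (∫ s in Set.Ioi (η + E), Real.exp (-t * (s - η)) ∂N.measure)
          ≤ ∫ s in Set.Ioi (η + E), Real.exp (-(t - τ) * E) * Real.exp (-τ * (s - η))
            ∂N.measure := by
        refine setIntegral_mono_on hi2
          ((hintτ.mono_set (Set.Ioi_subset_Ioi (by linarith))).const_mul _)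
          measurableSet_Ioi fun s hs => ?_
        rw [Set.mem_Ioi] at hs
        rw [← Real.exp_add]
        apply Real.exp_le_exp.2
        nlinarith
      have h2 : (∫ s in Set.Ioi (η + E), Real.exp (-(t - τ) * E) * Real.exp (-τ * (s - η))
            ∂N.measure) ≤ Real.exp (-(t - τ) * E) * Nt τ := by
        rw [integral_const_mul]
        apply mul_le_mul_of_nonneg_left _ (Real.exp_pos _).le
        exact setIntegral_mono_set hintτ (ae_of_all _ fun s => (Real.exp_pos _).le)
          (HasSubset.Subset.eventuallyLE (Set.Ioi_subset_Ioi (by linarith)))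
      linarith
    linarith [hsplit, bound1, bound2]
  -- positivity of Nt
  have Ntpos : ∀ t, τ ≤ t → 0 < Nt t := by
    obtain ⟨E₀, hE₀⟩ := hNne
    have hE₀η : η < E₀ := by
      by_contra hc
      push_neg at hc
      exact hE₀ (hN0 E₀ hc)
    have hNE₀ : 0 < N E₀ := by
      have h1 : 0 ≤ N E₀ := by rw [← hNη]; exact N.mono hE₀η.le
      exact h1.lt_of_ne (Ne.symm hE₀)
    intro t ht
    have := chern t ht (E₀ - η) (by linarith)
    rw [add_sub_cancel] at this
    calc (0:ℝ) < Real.exp (-t * (E₀ - η)) * N E₀ := by positivity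
      _ ≤ Nt t := this
  -- Nt tends to 0
  have Nt0 : Tendsto Nt atTop (nhds 0) := by
    have hconv : Tendsto (fun t => ∫ E in Set.Ioi η, Real.exp (-t * (E - η)) ∂N.measure)
        atTop (nhds (∫ E in Set.Ioi η, (0:ℝ) ∂N.measure)) := by
      apply tendsto_integral_filter_of_dominated_convergence
        (fun E => Real.exp (-τ * (E - η)))
      · exact Eventually.of_forall fun t => (hmeasInt t).aestronglyMeasurable
      · filter_upwards [eventually_ge_atTop τ] with t ht
        refine (ae_restrict_iff' measurableSet_Ioi).2 (ae_of_all _ fun E hE => ?_)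
        rw [Set.mem_Ioi] at hE
        rw [Real.norm_eq_abs, abs_of_pos (Real.exp_pos _)]
        apply Real.exp_le_exp.2
        nlinarith
      · exact hintτ
      · refine (ae_restrict_iff' measurableSet_Ioi).2 (ae_of_all _ fun E hE => ?_)
        rw [Set.mem_Ioi] at hE
        have h1 : Tendsto (fun t : ℝ => -t * (E - η)) atTop atBot := by
          have := tendsto_id.atTop_mul_const_of_neg (by linarith : -(E - η) < 0)
          refine this.congr fun t => ?_
          simp; ring
        exact Real.tendsto_exp_atBot.comp h1
    simpa only [integral_zero] using hconv
  have NtlogBot : Tendsto (fun t => Real.log (Nt t)) atTop atBot := by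
    have h1 : Tendsto Nt atTop (nhdsWithin 0 (Set.Ioi 0)) := by
      apply tendsto_nhdsWithin_of_tendsto_nhds_of_eventually_within _ Nt0
      filter_upwards [eventually_ge_atTop τ] with t ht
      exact Ntpos t ht
    exact Real.tendsto_log_nhdsGT_zero.comp h1
  -- right-continuity: M → 0
  have M0 : Tendsto (fun E => N (η + E)) (nhdsWithin 0 (Set.Ioi 0)) (nhds 0) := by
    have h2 : Tendsto N (nhdsWithin η (Set.Ici η)) (nhds 0) := by
      have := (N.right_continuous η).tendsto
      rwa [hNη] at this
    have h1 : Tendsto (fun E : ℝ => η + E) (nhdsWithin 0 (Set.Ioi 0))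
        (nhdsWithin η (Set.Ici η)) := by
      apply tendsto_nhdsWithin_of_tendsto_nhds_of_eventually_within
      · have : Tendsto (fun E : ℝ => η + E) (nhds 0) (nhds (η + 0)) :=
          (continuous_const.add continuous_id).tendsto 0
        rw [add_zero] at this
        exact this.mono_left nhdsWithin_le_nhds
      · filter_upwards [self_mem_nhdsWithin] with E hE
        rw [Set.mem_Ioi] at hE
        exact Set.mem_Ici.2 (by linarith)
    exact h2.comp h1
  have htf : Tendsto (fun t => t * f t) atTop atTop :=
    slow_mul_atTop f hfpos hfmeas hfslow
  have hsfs : Tendsto (fun s => s * fs s) atTop atTop :=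
    slow_mul_atTop fs hfspos hfsmeas hfsslow
  have hinv : Tendsto (fun s : ℝ => 1 / s) atTop (nhdsWithin 0 (Set.Ioi 0)) := by
    simpa [one_div] using tendsto_inv_atTop_nhdsGT_zero
  have hinvE : Tendsto (fun E : ℝ => 1 / E) (nhdsWithin 0 (Set.Ioi 0)) atTop := by
    simpa [one_div] using tendsto_inv_nhdsGT_zero
  -- algebraic helper identities
  have alg1 : ∀ L F1 F2 ft : ℝ, F1 ≠ 0 → F2 ≠ 0 →
      L / F1 * (F1 / F2) * (ft * F2) = ft * L := by
    intros L F1 F2 ft h1 h2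
    field_simp
  have alg2 : ∀ d ft L : ℝ, ft ≠ 0 → ft * (-(d/ft) + L) = -d + ft * L := by
    intros d ft L h
    field_simp
  have alg3 : ∀ t ft d : ℝ, t ≠ 0 → ft ≠ 0 → -t * (d/(t*ft)) = -(d/ft) := by
    intros t ft d h1 h2
    field_simp
  have alg4 : ∀ t τ' ft : ℝ, t ≠ 0 → ft ≠ 0 → -(t - τ') * (3/(t*ft)) = (-3 + 3*τ'/t)/ft := by
    intros t τ' ft h1 h2
    field_simp
    ring
  have alg5 : ∀ a c ft : ℝ, ft ≠ 0 → a/ft + c = (a + ft*c)/ft := by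
    intros a c ft h
    field_simp
  constructor
  · intro hL
    have hC : 0 < Nt τ := Ntpos τ le_rfl
    -- f tends to 0
    have hf0 : Tendsto f atTop (nhds 0) := by
      have h2 : Tendsto (fun t => -Real.log (Nt t)) atTop atTop :=
        tendsto_neg_atBot_atTop.comp NtlogBot
      have h3 : Tendsto (fun t => (-Real.log (Nt t))⁻¹) atTop (nhds 0) := h2.inv_tendsto_atTop
      have h4 : Tendsto (fun t => (Real.log (Nt t))⁻¹) atTop (nhds 0) := by
        have h5 := h3.neg
        rw [neg_zero] at h5
        apply h5.congr
        intro t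
        rw [inv_neg, neg_neg]
      have h5 := hL.mul h4
      have h6 : (-1 : ℝ) * 0 = 0 := by norm_num
      rw [h6] at h5
      apply h5.congr'
      filter_upwards [NtlogBot.eventually_le_atBot (-1)] with t hlt
      have hne : Real.log (Nt t) ≠ 0 := by linarith
      rw [mul_assoc, mul_inv_cancel₀ hne, mul_one]
    have hfstop : Tendsto fs atTop atTop := by
      have h1 : Tendsto (fun s => f (s * fs s)) atTop (nhdsWithin 0 (Set.Ioi 0)) := by
        apply tendsto_nhdsWithin_of_tendsto_nhds_of_eventually_within _ (hf0.comp hsfs)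
        filter_upwards [hsfs.eventually_gt_atTop 0] with s hs
        exact Set.mem_Ioi.2 (hfpos _ hs)
      have h2 : Tendsto (fun s => (f (s * fs s))⁻¹) atTop atTop := h1.inv_tendsto_nhdsGT_zero
      have h3 := Filter.Tendsto.pos_mul_atTop one_pos hconj2 h2
      apply h3.congr'
      filter_upwards [hsfs.eventually_gt_atTop 0] with s hs
      have hne : f (s * fs s) ≠ 0 := ne_of_gt (hfpos _ hs)
      rw [mul_assoc, mul_inv_cancel₀ hne, mul_one]
    -- positivity of N (η + E) for all E > 0
    have hMpos : ∀ E : ℝ, 0 < E → 0 < N (η + E) := by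
      intro E0 hE0
      rcases (hMnn E0).lt_or_eq with h | h
      · exact h
      exfalso
      have hb : ∀ᶠ t in atTop, f t * Real.log (Nt t)
          ≤ -E0 * (t * f t) + f t * (τ * E0 + Real.log (Nt τ)) := by
        filter_upwards [eventually_ge_atTop (max τ 1)] with t ht
        have htτ : τ ≤ t := le_trans (le_max_left _ _) ht
        have ht1 : (1:ℝ) ≤ t := le_trans (le_max_right _ _) ht
        have htpos : 0 < t := by linarith
        have hfp : 0 < f t := hfpos t htpos
        have hsp := split t htτ E0 hE0
        rw [← h, zero_add] at hsp
        have hlog := Real.log_le_log (Ntpos t htτ) hsp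
        rw [Real.log_mul (Real.exp_ne_zero _) (ne_of_gt hC), Real.log_exp] at hlog
        have hmul := mul_le_mul_of_nonneg_left hlog hfp.le
        have heq : f t * (-(t - τ) * E0 + Real.log (Nt τ))
            = -E0 * (t * f t) + f t * (τ * E0 + Real.log (Nt τ)) := by ring
        linarith
      have hrhs : Tendsto (fun t => -E0 * (t * f t) + f t * (τ * E0 + Real.log (Nt τ)))
          atTop atBot := by
        have h1 : Tendsto (fun t => -E0 * (t * f t)) atTop atBot := by
          have h2 := htf.atTop_mul_const_of_neg (neg_lt_zero.2 hE0)
          apply h2.congr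
          intro t
          ring
        have h2 : Tendsto (fun t => f t * (τ * E0 + Real.log (Nt τ))) atTop (nhds 0) := by
          simpa using hf0.mul_const (τ * E0 + Real.log (Nt τ))
        have h4 : Tendsto (fun t => -E0 * (t * f t) + 1) atTop atBot :=
          tendsto_atBot_add_const_right _ 1 h1
        apply tendsto_atBot_mono' atTop ?_ h4
        filter_upwards [h2.eventually_lt_const one_pos] with t h5
        linarith
      have hup := hL.eventually_const_lt (by norm_num : (-2:ℝ) < -1)
      rcases (hb.and ((hrhs.eventually_le_atBot (-2)).and hup)).exists with ⟨t, h1, h2, h3⟩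
      linarith
    -- main bounds
    have hfsE : Tendsto (fun E : ℝ => fs (1/E)) (nhdsWithin 0 (Set.Ioi 0)) atTop :=
      hfstop.comp hinvE
    have husfs : Tendsto (fun E : ℝ => (1/E) * fs (1/E)) (nhdsWithin 0 (Set.Ioi 0)) atTop :=
      hsfs.comp hinvE
    rw [Metric.tendsto_nhds]
    intro ε hε
    set δ := min (ε/8) (1/2) with hδdef
    have hδpos : 0 < δ := lt_min (by linarith) one_half_pos
    have hδ8 : δ ≤ ε/8 := min_le_left _ _
    have hδhalf : δ ≤ 1/2 := min_le_right _ _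
    -- the two time scales
    have ht1top : Tendsto (fun E : ℝ => δ * ((1/E) * fs (1/E)))
        (nhdsWithin 0 (Set.Ioi 0)) atTop := husfs.const_mul_atTop hδpos
    have ht2top : Tendsto (fun E : ℝ => 3 * ((1/E) * fs (1/E)))
        (nhdsWithin 0 (Set.Ioi 0)) atTop := husfs.const_mul_atTop (by norm_num)
    -- normalizing products  w_c E = f (c * u E) * fs (1/E) → 1
    have hw : ∀ c : ℝ, 0 < c → Tendsto (fun E : ℝ => f (c * ((1/E) * fs (1/E))) * fs (1/E))
        (nhdsWithin 0 (Set.Ioi 0)) (nhds 1) := by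
      intro c hc
      have ha : Tendsto (fun E : ℝ => f (c * ((1/E) * fs (1/E))) / f ((1/E) * fs (1/E)))
          (nhdsWithin 0 (Set.Ioi 0)) (nhds 1) := (hfslow c hc).comp husfs
      have hb2 : Tendsto (fun E : ℝ => fs (1/E) * f ((1/E) * fs (1/E)))
          (nhdsWithin 0 (Set.Ioi 0)) (nhds 1) := hconj2.comp hinvE
      have hmul := ha.mul hb2
      rw [one_mul] at hmul
      apply hmul.congr'
      filter_upwards [husfs.eventually_gt_atTop 0] with E hu
      have hne : f ((1/E) * fs (1/E)) ≠ 0 := ne_of_gt (hfpos _ hu)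
      rw [div_mul_eq_mul_div, mul_div_assoc, mul_div_cancel_right₀ _ hne]
    have hq1 : Tendsto (fun E : ℝ => (f (δ * ((1/E) * fs (1/E)))
          * Real.log (Nt (δ * ((1/E) * fs (1/E)))))
        / (f (δ * ((1/E) * fs (1/E))) * fs (1/E)))
        (nhdsWithin 0 (Set.Ioi 0)) (nhds (-1)) := by
      have := (hL.comp ht1top).div (hw δ hδpos) one_ne_zero
      rw [div_one] at this; exact this
    have hq2 : Tendsto (fun E : ℝ => (f (3 * ((1/E) * fs (1/E)))
          * Real.log (Nt (3 * ((1/E) * fs (1/E)))))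
        / (f (3 * ((1/E) * fs (1/E))) * fs (1/E)))
        (nhdsWithin 0 (Set.Ioi 0)) (nhds (-1)) := by
      have := (hL.comp ht2top).div (hw 3 (by norm_num)) one_ne_zero
      rw [div_one] at this; exact this
    -- upper bound
    have upper : ∀ᶠ E in nhdsWithin 0 (Set.Ioi 0),
        Real.log (N (η + E)) / fs (1/E) ≤ -1 + 2*δ := by
      filter_upwards [self_mem_nhdsWithin, ht1top.eventually_ge_atTop (max τ 1),
        (Metric.tendsto_nhds.mp hq1) δ hδpos] with E hE ht1 hq
      rw [Set.mem_Ioi] at hE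
      have hEne : E ≠ 0 := ne_of_gt hE
      set t := δ * ((1/E) * fs (1/E)) with htdef
      have htτ : τ ≤ t := le_trans (le_max_left _ _) ht1
      have ht1' : (1:ℝ) ≤ t := le_trans (le_max_right _ _) ht1
      have htpos : 0 < t := by linarith
      have hfp : 0 < f t := hfpos t htpos
      have hfsp : 0 < fs (1/E) := hfspos _ (by positivity)
      have hM := hMpos E hE
      have hch := chern t htτ E hE
      have hlog := Real.log_le_log (by positivity) hch
      rw [Real.log_mul (Real.exp_ne_zero _) (ne_of_gt hM), Real.log_exp] at hlog
      -- log M ≤ t*E + log Nt t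
      have hlogM : Real.log (N (η + E)) ≤ t * E + Real.log (Nt t) := by linarith
      have htE : t * E = δ * fs (1/E) := by
        rw [htdef]
        field_simp
      have hstep : Real.log (N (η + E)) / fs (1/E)
          ≤ (t * E + Real.log (Nt t)) / fs (1/E) := by gcongr
      have heqq : (t * E + Real.log (Nt t)) / fs (1/E)
          = δ + (f t * Real.log (Nt t)) / (f t * fs (1/E)) := by
        rw [htE, mul_div_mul_left _ _ (ne_of_gt hfp), add_div,
          mul_div_cancel_right₀ _ (ne_of_gt hfsp)]
      rw [Real.dist_eq] at hq
      rcases abs_lt.mp hq with ⟨hq1', hq2'⟩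
      calc Real.log (N (η + E)) / fs (1/E) ≤ (t * E + Real.log (Nt t)) / fs (1/E) := hstep
        _ = δ + (f t * Real.log (Nt t)) / (f t * fs (1/E)) := heqq
        _ ≤ δ + (-1 + δ) := by linarith
        _ = -1 + 2*δ := by ring
    -- lower bound
    have hlog2le : Real.log 2 ≤ 1 := by
      have := Real.add_one_le_exp (1:ℝ)
      have h2e : (2:ℝ) ≤ Real.exp 1 := by linarith
      calc Real.log 2 ≤ Real.log (Real.exp 1) := Real.log_le_log two_pos h2e
        _ = 1 := Real.log_exp 1
    set K := max (max 1 ((2/3) * (τ + |Real.log (Nt τ)| + 1))) (1/δ) with hKdef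
    have lower : ∀ᶠ E in nhdsWithin 0 (Set.Ioi 0),
        -1 - 2*δ ≤ Real.log (N (η + E)) / fs (1/E) := by
      have h00 : Tendsto (fun E : ℝ => E) (nhdsWithin 0 (Set.Ioi 0)) (nhds 0) :=
        tendsto_id.mono_left nhdsWithin_le_nhds
      have hEsmall : ∀ᶠ E : ℝ in nhdsWithin 0 (Set.Ioi 0), E < 1 :=
        h00.eventually_lt_const (by norm_num : (0:ℝ) < 1)
      filter_upwards [self_mem_nhdsWithin, ht2top.eventually_ge_atTop (max τ 1),
        (Metric.tendsto_nhds.mp hq2) δ hδpos, hfsE.eventually_ge_atTop K,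
        hEsmall] with E hE ht2 hq hfsK hE1
      rw [Set.mem_Ioi] at hE
      have hEne : E ≠ 0 := ne_of_gt hE
      set t := 3 * ((1/E) * fs (1/E)) with htdef
      have htτ : τ ≤ t := le_trans (le_max_left _ _) ht2
      have ht1' : (1:ℝ) ≤ t := le_trans (le_max_right _ _) ht2
      have htpos : 0 < t := by linarith
      have hfp : 0 < f t := hfpos t htpos
      have hfsp : 0 < fs (1/E) := hfspos _ (by positivity)
      have hM := hMpos E hE
      have hNtt := Ntpos t htτ
      have hsp := split t htτ E hE
      set A := fs (1/E) with hAdef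
      have hA1 : (1:ℝ) ≤ A := le_trans (le_trans (le_max_left _ _) (le_max_left _ _)) hfsK
      have hAK2 : (2/3) * (τ + |Real.log (Nt τ)| + 1) ≤ A :=
        le_trans (le_trans (le_max_right _ _) (le_max_left _ _)) hfsK
      have hAδ : 1/δ ≤ A := le_trans (le_max_right _ _) hfsK
      have htE : t * E = 3 * A := by
        rw [htdef, hAdef]
        field_simp
      set q := (f t * Real.log (Nt t)) / (f t * A) with hqdef
      rw [Real.dist_eq] at hq
      rcases abs_lt.mp hq with ⟨hq1', hq2'⟩
      have hlogNtq : Real.log (Nt t) = A * q := by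
        rw [hqdef, mul_div_mul_left _ _ (ne_of_gt hfp), mul_comm,
          div_mul_cancel₀ _ (ne_of_gt (lt_of_lt_of_le one_pos hA1))]
      -- the exponential tail is at most half of Nt t
      have hclaim : Real.exp (-(t - τ) * E) * Nt τ ≤ (1/2) * Nt t := by
        rw [← Real.log_le_log_iff (by positivity) (by positivity),
          Real.log_mul (Real.exp_ne_zero _) (ne_of_gt hC), Real.log_exp,
          Real.log_mul (by norm_num : (1:ℝ)/2 ≠ 0) (ne_of_gt hNtt),
          show Real.log ((1:ℝ)/2) = -Real.log 2 by rw [one_div, Real.log_inv],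
          hlogNtq]
        have hexp : -(t - τ) * E = -(t*E) + τ*E := by ring
        rw [hexp, htE]
        have hτE : τ * E ≤ τ := by nlinarith
        have hlogCle : Real.log (Nt τ) ≤ |Real.log (Nt τ)| := le_abs_self _
        have hAq : A * (-3/2) ≤ A * q := by
          apply mul_le_mul_of_nonneg_left ?_ (by linarith)
          linarith
        nlinarith
      have hMge : (1/2) * Nt t ≤ N (η + E) := by linarith
      have hlogM := Real.log_le_log (by positivity) hMge
      rw [Real.log_mul (by norm_num : (1:ℝ)/2 ≠ 0) (ne_of_gt hNtt),
        show Real.log ((1:ℝ)/2) = -Real.log 2 by rw [one_div, Real.log_inv],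
        hlogNtq] at hlogM
      -- divide by A
      have hApos : (0:ℝ) < A := by linarith
      have hstep : (-Real.log 2 + A * q) / A ≤ Real.log (N (η + E)) / A := by gcongr
      have heqq : (-Real.log 2 + A * q) / A = -Real.log 2 / A + q := by
        rw [add_div, mul_div_cancel_left₀ _ (ne_of_gt hApos)]
      have hlog2A : Real.log 2 / A ≤ δ := by
        have h1 : Real.log 2 / A ≤ 1 / A := by
          gcongr
        have h2 : 1 / A ≤ δ := by
          rw [div_le_iff₀ hApos]
          rw [div_le_iff₀ hδpos] at hAδ
          linarith
        linarith
      have : -δ + (-1 - δ) ≤ -Real.log 2 / A + q := by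
        have : -Real.log 2 / A ≥ -δ := by
          rw [neg_div]
          linarith
        linarith
      linarith [hstep, heqq]
    filter_upwards [lower, upper] with E hlo hup
    rw [Real.dist_eq]
    have habs : |Real.log (N (η + E)) / fs (1/E) - (-1)| ≤ 2*δ := by
      rw [abs_le]
      constructor <;> linarith
    linarith [habs]
  · intro hR
    -- eventual positivity of N (η + E)
    have hMpos_ev : ∀ᶠ E in nhdsWithin 0 (Set.Ioi 0), 0 < N (η + E) := by
      filter_upwards [hR.eventually_lt_const (by norm_num : (-1:ℝ) < (0:ℝ)),
        self_mem_nhdsWithin] with E hrat hE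
      rw [Set.mem_Ioi] at hE
      have hfsp : 0 < fs (1/E) := hfspos _ (by positivity)
      have hlogneg : Real.log (N (η + E)) < 0 := by
        by_contra hc
        push_neg at hc
        have := div_nonneg hc hfsp.le
        linarith
      rcases (hMnn E).lt_or_eq with h | h
      · exact h
      · exfalso
        rw [← h, Real.log_zero] at hlogneg
        linarith
    have hr1 : Tendsto (fun s : ℝ => Real.log (N (η + 1/s)) / fs s) atTop (nhds (-1)) := by
      have := hR.comp hinv
      simpa [Function.comp_def, one_div_one_div] using this
    have hlogMbot : Tendsto (fun s : ℝ => Real.log (N (η + 1/s))) atTop atBot := by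
      have hNto : Tendsto (fun s : ℝ => N (η + 1/s)) atTop (nhdsWithin 0 (Set.Ioi 0)) := by
        apply tendsto_nhdsWithin_of_tendsto_nhds_of_eventually_within
        · exact M0.comp hinv
        · exact hinv.eventually hMpos_ev
      exact Real.tendsto_log_nhdsGT_zero.comp hNto
    have hfstop : Tendsto fs atTop atTop := by
      have hinvr : Tendsto (fun s : ℝ => (Real.log (N (η + 1/s)) / fs s)⁻¹)
          atTop (nhds (-1)) := by
        simpa only [inv_neg, inv_one] using hr1.inv₀ (by norm_num : (-1:ℝ) ≠ 0)
      have hmul := hlogMbot.atBot_mul_neg (by norm_num : (-1:ℝ) < 0) hinvr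
      apply hmul.congr'
      filter_upwards [hlogMbot.eventually_le_atBot (-1), eventually_ge_atTop (1:ℝ)]
        with s hlog hs
      have hfsp : 0 < fs s := hfspos s (by linarith)
      have hlogne : Real.log (N (η + 1/s)) ≠ 0 := by linarith
      set L := Real.log (N (η + 1/s)) with hL
      rw [inv_div, ← mul_div_assoc, mul_comm L (fs s), mul_div_assoc, div_self hlogne,
        mul_one]
    have hf0 : Tendsto f atTop (nhds 0) := by
      have h1 : Tendsto (fun t => fs (t * f t)) atTop atTop := hfstop.comp htf
      have h2 : Tendsto (fun t => (fs (t * f t))⁻¹) atTop (nhds 0) := h1.inv_tendsto_atTop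
      have h3 := hconj1.mul h2
      rw [mul_zero] at h3
      apply h3.congr'
      filter_upwards [htf.eventually_ge_atTop 1] with t ht
      have hp : fs (t * f t) ≠ 0 := ne_of_gt (hfspos _ (by linarith))
      rw [mul_assoc, mul_inv_cancel₀ hp, mul_one]
    rw [Metric.tendsto_nhds]
    intro ε hε
    set δ := min (ε/8) (1/2) with hδdef
    have hδpos : 0 < δ := lt_min (by linarith) one_half_pos
    have hδ8 : δ ≤ ε/8 := min_le_left _ _
    have hδhalf : δ ≤ 1/2 := min_le_right _ _
    -- lower bound
    have hEt : Tendsto (fun t => δ / (t * f t)) atTop (nhdsWithin 0 (Set.Ioi 0)) := by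
      apply tendsto_nhdsWithin_of_tendsto_nhds_of_eventually_within
      · exact Tendsto.const_div_atTop htf δ
      · filter_upwards [htf.eventually_gt_atTop 0] with t ht
        exact Set.mem_Ioi.2 (by positivity)
    have hq1 : Tendsto (fun t => fs ((1/δ) * (t * f t)) / fs (t * f t)) atTop (nhds 1) :=
      (hfsslow (1/δ) (by positivity)).comp htf
    have hr2 : Tendsto (fun t => Real.log (N (η + δ/(t * f t))) / fs (1/(δ/(t * f t))))
        atTop (nhds (-1)) := hR.comp hEt
    have hcomb1 : Tendsto (fun t => (Real.log (N (η + δ/(t * f t))) / fs (1/(δ/(t * f t))))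
        * (fs ((1/δ) * (t * f t)) / fs (t * f t)) * (f t * fs (t * f t))) atTop
        (nhds (-1)) := by
      have := (hr2.mul hq1).mul hconj1
      simpa using this
    have lower : ∀ᶠ t in atTop, -1 - 2*δ ≤ f t * Real.log (Nt t) := by
      filter_upwards [eventually_ge_atTop (max τ 1), htf.eventually_ge_atTop 1,
        hEt.eventually hMpos_ev,
        (Metric.tendsto_nhds.mp hcomb1) δ hδpos] with t ht htf1 hM hc
      have htτ : τ ≤ t := le_trans (le_max_left _ _) ht
      have ht1 : (1:ℝ) ≤ t := le_trans (le_max_right _ _) ht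
      have htpos : 0 < t := by linarith
      have hfp : 0 < f t := hfpos t htpos
      have hu : (0:ℝ) < t * f t := by positivity
      have hEpos : 0 < δ / (t * f t) := by positivity
      have hch := chern t htτ (δ/(t * f t)) hEpos
      have hprod : 0 < Real.exp (-t * (δ/(t * f t))) * N (η + δ/(t * f t)) := by positivity
      have hlog := Real.log_le_log hprod hch
      rw [Real.log_mul (Real.exp_ne_zero _) (ne_of_gt hM), Real.log_exp,
        alg3 t (f t) δ (ne_of_gt htpos) (ne_of_gt hfp)] at hlog
      have hmul := mul_le_mul_of_nonneg_left hlog hfp.le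
      rw [alg2 δ (f t) _ (ne_of_gt hfp)] at hmul
      have hfsu : fs (t * f t) ≠ 0 := ne_of_gt (hfspos _ hu)
      have hfsu2 : fs ((1/δ) * (t * f t)) ≠ 0 := ne_of_gt (hfspos _ (by positivity))
      have hEinv : 1/(δ/(t * f t)) = (1/δ) * (t * f t) := by
        rw [one_div_div]
        ring
      rw [Real.dist_eq, hEinv, alg1 _ _ _ _ hfsu2 hfsu] at hc
      rcases abs_lt.mp hc with ⟨hc1, hc2⟩
      linarith
    -- upper bound
    have hC : 0 < Nt τ := Ntpos τ le_rfl
    have hEt3 : Tendsto (fun t => 3 / (t * f t)) atTop (nhdsWithin 0 (Set.Ioi 0)) := by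
      apply tendsto_nhdsWithin_of_tendsto_nhds_of_eventually_within
      · exact Tendsto.const_div_atTop htf 3
      · filter_upwards [htf.eventually_gt_atTop 0] with t ht
        exact Set.mem_Ioi.2 (by positivity)
    have hq3 : Tendsto (fun t => fs ((1/3) * (t * f t)) / fs (t * f t)) atTop (nhds 1) :=
      (hfsslow (1/3) (by norm_num)).comp htf
    have hr3 : Tendsto (fun t => Real.log (N (η + 3/(t * f t))) / fs (1/(3/(t * f t))))
        atTop (nhds (-1)) := hR.comp hEt3
    have hcomb3 : Tendsto (fun t => (Real.log (N (η + 3/(t * f t))) / fs (1/(3/(t * f t))))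
        * (fs ((1/3) * (t * f t)) / fs (t * f t)) * (f t * fs (t * f t))) atTop
        (nhds (-1)) := by
      have := (hr3.mul hq3).mul hconj1
      simpa using this
    have hflogC : Tendsto (fun t => f t * Real.log (Nt τ)) atTop (nhds 0) := by
      simpa using hf0.mul_const (Real.log (Nt τ))
    have hflog2 : Tendsto (fun t => f t * Real.log 2) atTop (nhds 0) := by
      simpa using hf0.mul_const (Real.log 2)
    have h3τt : Tendsto (fun t : ℝ => 3*τ/t) atTop (nhds 0) :=
      Tendsto.const_div_atTop tendsto_id (3*τ)
    have upper : ∀ᶠ t in atTop, f t * Real.log (Nt t) ≤ -1 + 2*δ := by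
      have habs1 := hflogC.abs
      rw [abs_zero] at habs1
      have habs2 := hflog2.abs
      rw [abs_zero] at habs2
      have habs3 := h3τt.abs
      rw [abs_zero] at habs3
      filter_upwards [eventually_ge_atTop (max τ 1), htf.eventually_ge_atTop 1,
        hEt3.eventually hMpos_ev,
        (Metric.tendsto_nhds.mp hcomb3) δ hδpos,
        habs1.eventually_lt_const one_half_pos,
        habs2.eventually_lt_const hδpos,
        habs3.eventually_lt_const one_half_pos] with t ht htf1 hM hc hlC hl2 h3τ
      have htτ : τ ≤ t := le_trans (le_max_left _ _) ht
      have ht1 : (1:ℝ) ≤ t := le_trans (le_max_right _ _) ht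
      have htpos : 0 < t := by linarith
      have hfp : 0 < f t := hfpos t htpos
      have hu : (0:ℝ) < t * f t := by positivity
      have hEpos : 0 < 3 / (t * f t) := by positivity
      have hsp := split t htτ (3/(t * f t)) hEpos
      have hfsu : fs (t * f t) ≠ 0 := ne_of_gt (hfspos _ hu)
      have hfsu2 : fs ((1/3) * (t * f t)) ≠ 0 := ne_of_gt (hfspos _ (by positivity))
      have hEinv : 1/((3:ℝ)/(t * f t)) = (1/3) * (t * f t) := by
        rw [one_div_div]
        ring
      rw [Real.dist_eq, hEinv, alg1 _ _ _ _ hfsu2 hfsu] at hc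
      rcases abs_lt.mp hc with ⟨hc1, hc2⟩
      rcases abs_lt.mp hlC with ⟨hlC1, hlC2⟩
      rcases abs_lt.mp hl2 with ⟨hl21, hl22⟩
      rcases abs_lt.mp h3τ with ⟨h3τ1, h3τ2⟩
      -- key claim
      have hclaim : Real.exp (-(t - τ) * (3/(t * f t))) * Nt τ ≤ N (η + 3/(t * f t)) := by
        rw [← Real.exp_log hC, ← Real.exp_add, ← Real.exp_log hM]
        apply Real.exp_le_exp.2
        have hLrw : Real.log (N (η + 3/(t * f t)))
            = (f t * Real.log (N (η + 3/(t * f t)))) / f t :=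
          (mul_div_cancel_left₀ _ (ne_of_gt hfp)).symm
        rw [alg4 t τ (f t) (ne_of_gt htpos) (ne_of_gt hfp),
          alg5 _ _ _ (ne_of_gt hfp), hLrw]
        gcongr
        linarith
      have hNt2 : Nt t ≤ 2 * N (η + 3/(t * f t)) := by linarith
      have hlogNt := Real.log_le_log (Ntpos t htτ) hNt2
      rw [Real.log_mul two_ne_zero (ne_of_gt hM)] at hlogNt
      have hmul2 := mul_le_mul_of_nonneg_left hlogNt hfp.le
      rw [mul_add] at hmul2
      linarith
    filter_upwards [lower, upper] with t hlo hup
    rw [Real.dist_eq]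
    have habs : |f t * Real.log (Nt t) - (-1)| ≤ 2*δ := by
      rw [abs_le]
      constructor <;> linarith
    linarith [habs]


end
end

section
/- Let N : ℝ → ℝ be nondecreasing and right-continuous with N(E) = 0 for all E ≤ 0 and N not identically zero, with associated Lebesgue–Stieltjes measure μ_N and Laplace–Stieltjes transform Ñ(t) := ∫_{(0,∞)} e^{−tE} dμ_N(E). Assume Ñ(τ) < ∞ for some τ > 0, let (f, f#) be a de Bruijn conjugate pair of slowly varying functions with lim_{t→∞} f(t) = 0 and lim_{t→∞} f#(t) = ∞, and assume that either lim_{t→∞} f(t) · log Ñ(t) = −1 or lim_{E↓0} (log N(E)) / f#(1/E) = −1. Then there exists E₀ > 0 such that for all E ∈ (0, E₀): N(E) ≥ Ñ(f#(1/E)/E) − 2 exp(−(9/8) f#(1/E)). -/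
open MeasureTheory Filter Real

noncomputable section

lemma aux_le_exp_log (x : ℝ) : x ≤ Real.exp (Real.log x) := by
  rcases le_or_gt x 0 with h | h
  · exact h.trans (Real.exp_pos _).le
  · rw [Real.exp_log h]

lemma aux_intOn {μ : Measure ℝ} {τ t : ℝ}
    (hfin : (∫⁻ x in Set.Ioi (0:ℝ), ENNReal.ofReal (Real.exp (-τ * x)) ∂μ) < ⊤)
    (ht : τ ≤ t) :
    IntegrableOn (fun x => Real.exp (-t * x)) (Set.Ioi 0) μ := by
  have hm : ∀ c : ℝ, AEStronglyMeasurable (fun x => Real.exp (-c * x)) (μ.restrict (Set.Ioi 0)) :=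
    fun c => (Real.measurable_exp.comp (measurable_const.mul measurable_id)).aestronglyMeasurable
  have hτint : IntegrableOn (fun x => Real.exp (-τ * x)) (Set.Ioi 0) μ := by
    refine ⟨hm τ, ?_⟩
    rw [hasFiniteIntegral_iff_ofReal (Eventually.of_forall fun x => (Real.exp_pos _).le)]
    exact hfin
  refine hτint.mono' (hm t) ?_
  filter_upwards [ae_restrict_mem measurableSet_Ioi] with x hx
  rw [Real.norm_eq_abs, abs_of_pos (Real.exp_pos _)]
  refine Real.exp_le_exp.2 ?_
  nlinarith [le_of_lt (Set.mem_Ioi.1 hx : (0:ℝ) < x)]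

lemma aux_tail {μ : Measure ℝ} {σ t a : ℝ} (ha : 0 ≤ a) (ht : σ ≤ t)
    (hσint : IntegrableOn (fun x => Real.exp (-σ * x)) (Set.Ioi 0) μ)
    (htint : IntegrableOn (fun x => Real.exp (-t * x)) (Set.Ioi 0) μ) :
    ∫ x in Set.Ioi a, Real.exp (-t * x) ∂μ ≤
      Real.exp (-(t - σ) * a) * ∫ x in Set.Ioi 0, Real.exp (-σ * x) ∂μ := by
  have hsub : Set.Ioi a ⊆ Set.Ioi (0:ℝ) := Set.Ioi_subset_Ioi ha
  have h1 : ∫ x in Set.Ioi a, Real.exp (-t * x) ∂μ ≤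
      ∫ x in Set.Ioi a, Real.exp (-(t - σ) * a) * Real.exp (-σ * x) ∂μ := by
    refine setIntegral_mono_on (htint.mono_set hsub)
      ((hσint.mono_set hsub).const_mul _) measurableSet_Ioi ?_
    intro x hx
    rw [← Real.exp_add]
    refine Real.exp_le_exp.2 ?_
    nlinarith [le_of_lt (Set.mem_Ioi.1 hx : a < x), sub_nonneg.2 ht]
  have h2 : ∫ x in Set.Ioi a, Real.exp (-σ * x) ∂μ ≤
      ∫ x in Set.Ioi 0, Real.exp (-σ * x) ∂μ :=
    setIntegral_mono_set hσint
      (Eventually.of_forall fun x => (Real.exp_pos _).le) hsub.eventuallyLE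
  calc ∫ x in Set.Ioi a, Real.exp (-t * x) ∂μ
      ≤ ∫ x in Set.Ioi a, Real.exp (-(t - σ) * a) * Real.exp (-σ * x) ∂μ := h1
    _ = Real.exp (-(t - σ) * a) * ∫ x in Set.Ioi a, Real.exp (-σ * x) ∂μ := by
        rw [integral_const_mul]
    _ ≤ Real.exp (-(t - σ) * a) * ∫ x in Set.Ioi 0, Real.exp (-σ * x) ∂μ :=
        mul_le_mul_of_nonneg_left h2 (Real.exp_pos _).le

set_option maxHeartbeats 1000000 in
/-- Lower bound of Lemma TL2: for sufficiently small `E > 0`,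
`N(E) ≥ Ñ(f#(1/E)/E) - 2 exp(-(9/8) f#(1/E))`. -/
theorem stmt_14
    (N : StieltjesFunction ℝ) (hN0 : ∀ E ≤ (0 : ℝ), N E = 0) (hNne : ∃ E, N E ≠ 0)
    (hfin : ∃ τ > 0,
      (∫⁻ E in Set.Ioi (0 : ℝ), ENNReal.ofReal (Real.exp (-τ * E)) ∂N.measure) < ⊤)
    (f fs : ℝ → ℝ)
    (hfpos : ∀ t > 0, 0 < f t) (hfspos : ∀ t > 0, 0 < fs t)
    (hfmeas : Measurable f) (hfsmeas : Measurable fs)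
    (hfslow : ∀ c > 0, Tendsto (fun t : ℝ => f (c * t) / f t) atTop (nhds 1))
    (hfsslow : ∀ c > 0, Tendsto (fun t : ℝ => fs (c * t) / fs t) atTop (nhds 1))
    (hconj1 : Tendsto (fun t : ℝ => f t * fs (t * f t)) atTop (nhds 1))
    (hconj2 : Tendsto (fun t : ℝ => fs t * f (t * fs t)) atTop (nhds 1))
    (hf0 : Tendsto f atTop (nhds 0))
    (hfstop : Tendsto fs atTop atTop)
    (hyp : Tendsto (fun t : ℝ =>
          f t * Real.log (∫ E in Set.Ioi (0 : ℝ), Real.exp (-t * E) ∂N.measure))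
          atTop (nhds (-1)) ∨
        Tendsto (fun E : ℝ => Real.log (N E) / fs (1 / E))
          (nhdsWithin 0 (Set.Ioi 0)) (nhds (-1))) :
    ∃ E₀ > 0, ∀ E ∈ Set.Ioo (0 : ℝ) E₀,
      (∫ x in Set.Ioi (0 : ℝ), Real.exp (-(fs (1 / E) / E) * x) ∂N.measure) -
        2 * Real.exp (-(9 / 8) * fs (1 / E)) ≤ N E := by
  obtain ⟨τ, hτ, hfinτ⟩ := hfin
  have hN0' : N 0 = 0 := hN0 0 le_rfl
  have hNnn : ∀ E : ℝ, 0 ≤ N E := by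
    intro E
    rcases le_or_gt E 0 with h | h
    · exact (hN0 E h).ge
    · rw [← hN0']; exact N.mono h.le
  -- basic tendsto facts along 𝓝[>] 0
  have hE0 : ∀ᶠ E in nhdsWithin (0:ℝ) (Set.Ioi 0), 0 < E := self_mem_nhdsWithin
  have hu : Tendsto (fun E : ℝ => 1/E) (nhdsWithin (0:ℝ) (Set.Ioi 0)) atTop := by
    simpa [one_div] using tendsto_inv_nhdsGT_zero (𝕜 := ℝ)
  have hF : Tendsto (fun E : ℝ => fs (1/E)) (nhdsWithin (0:ℝ) (Set.Ioi 0)) atTop := hfstop.comp hu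
  have htt : Tendsto (fun E : ℝ => fs (1/E) / E) (nhdsWithin (0:ℝ) (Set.Ioi 0)) atTop := by
    refine (hu.atTop_mul_atTop₀ hF).congr' ?_
    filter_upwards [hE0] with E hE
    ring
  -- key tail estimate
  have hkey : ∀ᶠ E in nhdsWithin (0:ℝ) (Set.Ioi 0),
      (∫ x in Set.Ioi E, Real.exp (-(fs (1/E)/E) * x) ∂N.measure) ≤
        2 * Real.exp (-(9/8) * fs (1/E)) := by
    rcases hyp with hyp1 | hyp2
    · -- Case 1 : f(t) log Ñ(t) → -1
      have hs : Tendsto (fun E : ℝ => fs (1/E)/E/2) (nhdsWithin (0:ℝ) (Set.Ioi 0)) atTop :=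
        htt.atTop_div_const two_pos
      have hA : Tendsto (fun E : ℝ => f (fs (1/E)/E/2) *
          Real.log (∫ x in Set.Ioi (0:ℝ), Real.exp (-(fs (1/E)/E/2) * x) ∂N.measure))
          (nhdsWithin (0:ℝ) (Set.Ioi 0)) (nhds (-1)) := hyp1.comp hs
      have hv : Tendsto (fun E : ℝ => (1/E) * fs (1/E)) (nhdsWithin (0:ℝ) (Set.Ioi 0)) atTop :=
        hu.atTop_mul_atTop₀ hF
      have h1 : Tendsto (fun E : ℝ => fs (1/E) * f ((1/E) * fs (1/E)))
          (nhdsWithin (0:ℝ) (Set.Ioi 0)) (nhds 1) := hconj2.comp hu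
      have h2 : Tendsto (fun E : ℝ => f ((1/2) * ((1/E) * fs (1/E))) / f ((1/E) * fs (1/E)))
          (nhdsWithin (0:ℝ) (Set.Ioi 0)) (nhds 1) := (hfslow (1/2) (by norm_num)).comp hv
      have hB : Tendsto (fun E : ℝ => fs (1/E) * f (fs (1/E)/E/2))
          (nhdsWithin (0:ℝ) (Set.Ioi 0)) (nhds 1) := by
        have h12 : Tendsto (fun E : ℝ => (fs (1/E) * f ((1/E) * fs (1/E))) *
            (f ((1/2) * ((1/E) * fs (1/E))) / f ((1/E) * fs (1/E))))
            (nhdsWithin (0:ℝ) (Set.Ioi 0)) (nhds 1) := by simpa using h1.mul h2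
        refine h12.congr' ?_
        filter_upwards [hE0] with E hE
        have hv0 : 0 < (1/E) * fs (1/E) :=
          mul_pos (one_div_pos.2 hE) (hfspos _ (one_div_pos.2 hE))
        have hfv : f ((1/E) * fs (1/E)) ≠ 0 := (hfpos _ hv0).ne'
        have harg : (1/2) * ((1/E) * fs (1/E)) = fs (1/E)/E/2 := by ring
        rw [harg, mul_assoc, mul_comm (f ((1/E) * fs (1/E))), div_mul_cancel₀ _ hfv]
      have hC1 : Tendsto (fun E : ℝ => (f (fs (1/E)/E/2) *
          Real.log (∫ x in Set.Ioi (0:ℝ), Real.exp (-(fs (1/E)/E/2) * x) ∂N.measure)) /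
          (fs (1/E) * f (fs (1/E)/E/2)))
          (nhdsWithin (0:ℝ) (Set.Ioi 0)) (nhds (-1)) := by
        have h := hA.div hB one_ne_zero; rwa [div_one] at h
      have hD : Tendsto (fun E : ℝ =>
          Real.log (∫ x in Set.Ioi (0:ℝ), Real.exp (-(fs (1/E)/E/2) * x) ∂N.measure) / fs (1/E))
          (nhdsWithin (0:ℝ) (Set.Ioi 0)) (nhds (-1)) := by
        refine hC1.congr' ?_
        filter_upwards [hE0] with E hE
        have hs0 : 0 < fs (1/E)/E/2 :=
          div_pos (div_pos (hfspos _ (one_div_pos.2 hE)) hE) two_pos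
        have hfs0 : f (fs (1/E)/E/2) ≠ 0 := (hfpos _ hs0).ne'
        rw [mul_comm (fs (1/E)) (f (fs (1/E)/E/2)), mul_div_mul_left _ _ hfs0]
      have hlogle : ∀ᶠ E in nhdsWithin (0:ℝ) (Set.Ioi 0),
          Real.log (∫ x in Set.Ioi (0:ℝ), Real.exp (-(fs (1/E)/E/2) * x) ∂N.measure) / fs (1/E)
            ≤ -(5/8) := hD.eventually_le_const (by norm_num)
      filter_upwards [hE0, hs.eventually_ge_atTop τ, hlogle] with E hE hsτ hlog
      have hFpos : 0 < fs (1/E) := hfspos _ (one_div_pos.2 hE)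
      have htτ' : τ ≤ fs (1/E)/E := by linarith
      have hints := aux_intOn hfinτ hsτ
      have hintt := aux_intOn hfinτ htτ'
      have h1 := aux_tail (μ := N.measure) (σ := fs (1/E)/E/2) (t := fs (1/E)/E) (a := E)
        hE.le (by linarith) hints hintt
      have hlog' : Real.log (∫ x in Set.Ioi (0:ℝ), Real.exp (-(fs (1/E)/E/2) * x) ∂N.measure)
          ≤ -(5/8) * fs (1/E) := by
        have := (div_le_iff₀ hFpos).1 hlog
        linarith
      have hNs : (∫ x in Set.Ioi (0:ℝ), Real.exp (-(fs (1/E)/E/2) * x) ∂N.measure)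
          ≤ Real.exp (-(5/8) * fs (1/E)) :=
        (aux_le_exp_log _).trans (Real.exp_le_exp.2 hlog')
      have harg : -(fs (1/E)/E - fs (1/E)/E/2) * E = -(fs (1/E)/2) := by
        field_simp
        ring
      calc (∫ x in Set.Ioi E, Real.exp (-(fs (1/E)/E) * x) ∂N.measure)
          ≤ Real.exp (-(fs (1/E)/E - fs (1/E)/E/2) * E) *
            ∫ x in Set.Ioi (0:ℝ), Real.exp (-(fs (1/E)/E/2) * x) ∂N.measure := h1
        _ ≤ Real.exp (-(fs (1/E)/2)) * Real.exp (-(5/8) * fs (1/E)) := by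
            rw [harg]
            exact mul_le_mul_of_nonneg_left hNs (Real.exp_pos _).le
        _ ≤ 2 * Real.exp (-(9/8) * fs (1/E)) := by
            rw [← Real.exp_add]
            have he : -(fs (1/E)/2) + -(5/8) * fs (1/E) = -(9/8) * fs (1/E) := by ring
            rw [he]
            linarith [Real.exp_pos (-(9/8) * fs (1/E))]
    · -- Case 2 : log N(E) / fs(1/E) → -1
      have h2E : Tendsto (fun E : ℝ => 2*E) (nhdsWithin (0:ℝ) (Set.Ioi 0))
          (nhdsWithin (0:ℝ) (Set.Ioi 0)) := by
        apply tendsto_nhdsWithin_of_tendsto_nhds_of_eventually_within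
        · have h0 : Tendsto (fun E : ℝ => 2*E) (nhds 0) (nhds 0) := by
            simpa using (continuous_mul_left (2:ℝ)).tendsto (0:ℝ)
          exact h0.mono_left nhdsWithin_le_nhds
        · filter_upwards [hE0] with E hE
          exact Set.mem_Ioi.2 (by linarith)
      have hyp2' : Tendsto (fun E : ℝ => Real.log (N (2*E)) / fs (1/(2*E)))
          (nhdsWithin (0:ℝ) (Set.Ioi 0)) (nhds (-1)) := hyp2.comp h2E
      have hratio : Tendsto (fun E : ℝ => fs ((1/2) * (1/E)) / fs (1/E))
          (nhdsWithin (0:ℝ) (Set.Ioi 0)) (nhds 1) := (hfsslow (1/2) (by norm_num)).comp hu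
      have e1 : ∀ᶠ E in nhdsWithin (0:ℝ) (Set.Ioi 0),
          Real.log (N (2*E)) / fs (1/(2*E)) ≤ -(3/4) := hyp2'.eventually_le_const (by norm_num)
      have e2 : ∀ᶠ E in nhdsWithin (0:ℝ) (Set.Ioi 0),
          (2/3 : ℝ) ≤ fs ((1/2) * (1/E)) / fs (1/E) := hratio.eventually_const_le (by norm_num)
      have hCnn : (0:ℝ) ≤ ∫ x in Set.Ioi (0:ℝ), Real.exp (-τ * x) ∂N.measure :=
        integral_nonneg fun x => (Real.exp_pos _).le
      set C := ∫ x in Set.Ioi (0:ℝ), Real.exp (-τ * x) ∂N.measure with hCdef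
      have hbig : ∀ᶠ E in nhdsWithin (0:ℝ) (Set.Ioi 0),
          Real.log (Real.exp (2*τ) * C + 1) ≤ (7/8) * fs (1/E) := by
        filter_upwards [hF.eventually_ge_atTop ((8/7) * Real.log (Real.exp (2*τ) * C + 1))]
          with E hE
        linarith
      have hsmall : ∀ᶠ E in nhdsWithin (0:ℝ) (Set.Ioi 0), E < 1 := by
        have hid : Tendsto (fun E : ℝ => E) (nhdsWithin (0:ℝ) (Set.Ioi 0)) (nhds 0) :=
          tendsto_id.mono_left nhdsWithin_le_nhds
        exact hid.eventually_lt_const (by norm_num)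
      filter_upwards [hE0, htt.eventually_ge_atTop τ, e1, e2, hbig, hsmall]
        with E hE htE he1 he2 hbigE hE1
      have hFpos : 0 < fs (1/E) := hfspos _ (one_div_pos.2 hE)
      have harg2 : (1:ℝ)/(2*E) = (1/2) * (1/E) := by ring
      have hfs2pos : 0 < fs (1/(2*E)) := hfspos _ (by positivity)
      have hfs2ge : (2/3) * fs (1/E) ≤ fs (1/(2*E)) := by
        rw [harg2]
        exact (le_div_iff₀ hFpos).1 he2
      have hlogN : Real.log (N (2*E)) ≤ -(1/2) * fs (1/E) := by
        have h1 := (div_le_iff₀ hfs2pos).1 he1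
        nlinarith
      have hN2 : (N (2*E) : ℝ) ≤ Real.exp (-(1/2) * fs (1/E)) :=
        (aux_le_exp_log _).trans (Real.exp_le_exp.2 hlogN)
      have hintt := aux_intOn hfinτ htE
      have hintτ : IntegrableOn (fun x => Real.exp (-τ * x)) (Set.Ioi 0) N.measure :=
        aux_intOn hfinτ le_rfl
      have hsub1 : Set.Ioc E (2*E) ⊆ Set.Ioi (0:ℝ) :=
        Set.Ioc_subset_Ioi_self.trans (Set.Ioi_subset_Ioi hE.le)
      have hsub2 : Set.Ioi (2*E) ⊆ Set.Ioi (0:ℝ) := Set.Ioi_subset_Ioi (by linarith)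
      have hsplitT : (∫ x in Set.Ioi E, Real.exp (-(fs (1/E)/E) * x) ∂N.measure)
          = (∫ x in Set.Ioc E (2*E), Real.exp (-(fs (1/E)/E) * x) ∂N.measure)
            + ∫ x in Set.Ioi (2*E), Real.exp (-(fs (1/E)/E) * x) ∂N.measure := by
        rw [← setIntegral_union (Set.Ioc_disjoint_Ioi le_rfl) measurableSet_Ioi
          (hintt.mono_set hsub1) (hintt.mono_set hsub2),
          Set.Ioc_union_Ioi_eq_Ioi (by linarith : E ≤ 2*E)]
      -- first piece
      have hμlt : N.measure (Set.Ioc E (2*E)) < ⊤ := by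
        rw [N.measure_Ioc]; exact ENNReal.ofReal_lt_top
      have hAbound := norm_setIntegral_le_of_norm_le_const
        (C := Real.exp (-(fs (1/E)/E) * E)) hμlt
        (f := fun x => Real.exp (-(fs (1/E)/E) * x)) ?_
      swap
      · intro x hx
        rw [Real.norm_eq_abs, abs_of_pos (Real.exp_pos _)]
        refine Real.exp_le_exp.2 ?_
        have hx1 : E < x := hx.1
        have htpos : 0 < fs (1/E)/E := lt_of_lt_of_le hτ htE
        nlinarith
      have htr : (N.measure (Set.Ioc E (2*E))).toReal = N (2*E) - N E := by
        rw [N.measure_Ioc, ENNReal.toReal_ofReal (sub_nonneg.2 (N.mono (by linarith)))]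
      have hargE : -(fs (1/E)/E) * E = -fs (1/E) := by field_simp
      have hA1 : (∫ x in Set.Ioc E (2*E), Real.exp (-(fs (1/E)/E) * x) ∂N.measure)
          ≤ Real.exp (-fs (1/E)) * N (2*E) := by
        calc (∫ x in Set.Ioc E (2*E), Real.exp (-(fs (1/E)/E) * x) ∂N.measure)
            ≤ ‖∫ x in Set.Ioc E (2*E), Real.exp (-(fs (1/E)/E) * x) ∂N.measure‖ := le_abs_self _
          _ ≤ Real.exp (-(fs (1/E)/E) * E) * (N.measure (Set.Ioc E (2*E))).toReal := hAbound
          _ = Real.exp (-fs (1/E)) * (N (2*E) - N E) := by rw [htr, hargE]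
          _ ≤ Real.exp (-fs (1/E)) * N (2*E) :=
              mul_le_mul_of_nonneg_left (by linarith [hNnn E]) (Real.exp_pos _).le
      have hA2 : (∫ x in Set.Ioc E (2*E), Real.exp (-(fs (1/E)/E) * x) ∂N.measure)
          ≤ Real.exp (-(9/8) * fs (1/E)) := by
        refine hA1.trans ?_
        calc Real.exp (-fs (1/E)) * N (2*E)
            ≤ Real.exp (-fs (1/E)) * Real.exp (-(1/2) * fs (1/E)) :=
              mul_le_mul_of_nonneg_left hN2 (Real.exp_pos _).le
          _ = Real.exp (-fs (1/E) + -(1/2) * fs (1/E)) := (Real.exp_add _ _).symm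
          _ ≤ Real.exp (-(9/8) * fs (1/E)) := Real.exp_le_exp.2 (by linarith)
      -- second piece
      have hB0 := aux_tail (μ := N.measure) (σ := τ) (t := fs (1/E)/E) (a := 2*E)
        (by linarith) htE hintτ hintt
      have hargB : -(fs (1/E)/E - τ) * (2*E) = -(2 * fs (1/E)) + 2*τ*E := by
        field_simp
        ring
      have hB1 : (∫ x in Set.Ioi (2*E), Real.exp (-(fs (1/E)/E) * x) ∂N.measure)
          ≤ Real.exp (-(2 * fs (1/E)) + 2*τ*E) * C := by
        rw [← hargB]
        exact hB0
      have hB2 : Real.exp (-(2 * fs (1/E)) + 2*τ*E) * C ≤ Real.exp (-(9/8) * fs (1/E)) := by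
        have hK : (0:ℝ) < Real.exp (2*τ) * C + 1 := by positivity
        have h1 : Real.exp (2*τ*E) * C ≤ Real.exp (2*τ) * C :=
          mul_le_mul_of_nonneg_right (Real.exp_le_exp.2 (by nlinarith)) hCnn
        have h2 : Real.exp (2*τ) * C + 1 ≤ Real.exp ((7/8) * fs (1/E)) := by
          calc Real.exp (2*τ) * C + 1 = Real.exp (Real.log (Real.exp (2*τ) * C + 1)) :=
                (Real.exp_log hK).symm
            _ ≤ Real.exp ((7/8) * fs (1/E)) := Real.exp_le_exp.2 hbigE
        calc Real.exp (-(2 * fs (1/E)) + 2*τ*E) * C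
            = Real.exp (-(2 * fs (1/E))) * (Real.exp (2*τ*E) * C) := by
              rw [Real.exp_add]; ring
          _ ≤ Real.exp (-(2 * fs (1/E))) * Real.exp ((7/8) * fs (1/E)) := by
              refine mul_le_mul_of_nonneg_left ?_ (Real.exp_pos _).le
              linarith
          _ = Real.exp (-(2 * fs (1/E)) + (7/8) * fs (1/E)) := (Real.exp_add _ _).symm
          _ ≤ Real.exp (-(9/8) * fs (1/E)) := Real.exp_le_exp.2 (by linarith)
      rw [hsplitT]
      have := hB1.trans hB2
      linarith
  -- assemble
  have hfinal : ∀ᶠ E in nhdsWithin (0:ℝ) (Set.Ioi 0),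
      (∫ x in Set.Ioi (0:ℝ), Real.exp (-(fs (1/E)/E) * x) ∂N.measure) -
        2 * Real.exp (-(9/8) * fs (1/E)) ≤ N E := by
    filter_upwards [hE0, htt.eventually_ge_atTop τ, hkey] with E hE htE hkE
    have hint := aux_intOn hfinτ htE
    have hsplit : (∫ x in Set.Ioi (0:ℝ), Real.exp (-(fs (1/E)/E) * x) ∂N.measure)
        = (∫ x in Set.Ioc (0:ℝ) E, Real.exp (-(fs (1/E)/E) * x) ∂N.measure)
          + ∫ x in Set.Ioi E, Real.exp (-(fs (1/E)/E) * x) ∂N.measure := by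
      rw [← setIntegral_union (Set.Ioc_disjoint_Ioi le_rfl) measurableSet_Ioi
        (hint.mono_set Set.Ioc_subset_Ioi_self) (hint.mono_set (Set.Ioi_subset_Ioi hE.le)),
        Set.Ioc_union_Ioi_eq_Ioi hE.le]
    have hIocle : (∫ x in Set.Ioc (0:ℝ) E, Real.exp (-(fs (1/E)/E) * x) ∂N.measure) ≤ N E := by
      have hμlt : N.measure (Set.Ioc (0:ℝ) E) < ⊤ := by
        rw [N.measure_Ioc]; exact ENNReal.ofReal_lt_top
      have hb := norm_setIntegral_le_of_norm_le_const (C := 1) hμlt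
        (f := fun x => Real.exp (-(fs (1/E)/E) * x)) ?_
      · have htr : (N.measure (Set.Ioc (0:ℝ) E)).toReal = N E := by
          rw [N.measure_Ioc, ENNReal.toReal_ofReal (by linarith [hNnn E, hN0'] : (0:ℝ) ≤ N E - N 0),
            hN0', sub_zero]
        calc (∫ x in Set.Ioc (0:ℝ) E, Real.exp (-(fs (1/E)/E) * x) ∂N.measure)
            ≤ ‖∫ x in Set.Ioc (0:ℝ) E, Real.exp (-(fs (1/E)/E) * x) ∂N.measure‖ := le_abs_self _
          _ ≤ 1 * (N.measure (Set.Ioc (0:ℝ) E)).toReal := hb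
          _ = N E := by rw [one_mul, htr]
      · intro x hx
        rw [Real.norm_eq_abs, abs_of_pos (Real.exp_pos _), Real.exp_le_one_iff]
        have hx0 : 0 < x := hx.1
        nlinarith [hτ, htE]
    linarith
  rw [eventually_nhdsWithin_iff, Metric.eventually_nhds_iff] at hfinal
  obtain ⟨ε, hε, hball⟩ := hfinal
  refine ⟨ε, hε, fun E hE => ?_⟩
  exact hball (by simpa [Real.dist_eq, abs_of_pos hE.1] using hE.2) hE.1
end
end

section
/- Let N : ℝ → ℝ be nondecreasing and right-continuous with N(E) = 0 for all E ≤ 0 and N not identically zero, with associated Lebesgue–Stieltjes measure μ_N and Laplace–Stieltjes transform Ñ(t) := ∫_{(0,∞)} e^{−tE} dμ_N(E). Assume Ñ(τ) < ∞ for some τ > 0, let (f, f#) be a de Bruijn conjugate pair of slowly varying functions with lim_{t→∞} f(t) = 0 and lim_{t→∞} f#(t) = ∞, and assume lim_{t→∞} f(t) · log Ñ(t) = −1. Then there exists E₀ > 0 such that N(E) ≤ exp(−f#(1/E)/2) for all E ∈ (0, E₀). -/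
open MeasureTheory Filter Real

noncomputable section

/-- From `lim_{t→∞} f(t) log Ñ(t) = -1` one gets `N(E) ≤ exp(-f#(1/E)/2)` for
sufficiently small `E > 0`. -/
theorem stmt_15
    (N : StieltjesFunction ℝ) (hN0 : ∀ E ≤ (0 : ℝ), N E = 0) (hNne : ∃ E, N E ≠ 0)
    (hfin : ∃ τ > 0,
      (∫⁻ E in Set.Ioi (0 : ℝ), ENNReal.ofReal (Real.exp (-τ * E)) ∂N.measure) < ⊤)
    (f fs : ℝ → ℝ)
    (hfpos : ∀ t > 0, 0 < f t) (hfspos : ∀ t > 0, 0 < fs t)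
    (hfmeas : Measurable f) (hfsmeas : Measurable fs)
    (hfslow : ∀ c > 0, Tendsto (fun t : ℝ => f (c * t) / f t) atTop (nhds 1))
    (hfsslow : ∀ c > 0, Tendsto (fun t : ℝ => fs (c * t) / fs t) atTop (nhds 1))
    (hconj1 : Tendsto (fun t : ℝ => f t * fs (t * f t)) atTop (nhds 1))
    (hconj2 : Tendsto (fun t : ℝ => fs t * f (t * fs t)) atTop (nhds 1))
    (hf0 : Tendsto f atTop (nhds 0))
    (hfstop : Tendsto fs atTop atTop)
    (hyp : Tendsto (fun t : ℝ =>
        f t * Real.log (∫ E in Set.Ioi (0 : ℝ), Real.exp (-t * E) ∂N.measure))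
        atTop (nhds (-1))) :
    ∃ E₀ > 0, ∀ E ∈ Set.Ioo (0 : ℝ) E₀, N E ≤ Real.exp (-(fs (1 / E)) / 2) := by
  obtain ⟨τ, hτ, hfin⟩ := hfin
  set L : ℝ → ℝ := fun t => ∫ E in Set.Ioi (0:ℝ), Real.exp (-t * E) ∂N.measure with hLdef
  -- nonnegativity of N
  have hNnonneg : ∀ E, 0 ≤ N E := by
    intro E
    rcases le_or_gt E 0 with h | h
    · rw [hN0 E h]
    · rw [← hN0 0 le_rfl]; exact N.mono h.le
  -- integrability
  have hint : ∀ t, τ ≤ t → IntegrableOn (fun E => Real.exp (-t * E)) (Set.Ioi 0) N.measure := by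
    intro t ht
    constructor
    · exact ((measurable_id.const_mul (-t)).exp).aestronglyMeasurable
    · rw [hasFiniteIntegral_iff_ofReal (ae_of_all _ fun x => (Real.exp_pos _).le)]
      refine lt_of_le_of_lt ?_ hfin
      refine setLIntegral_mono
        (ENNReal.measurable_ofReal.comp ((measurable_id.const_mul (-τ)).exp)) fun x hx => ?_
      refine ENNReal.ofReal_le_ofReal (Real.exp_le_exp.2 ?_)
      have hx0 : (0:ℝ) < x := hx
      nlinarith
  -- Chebyshev
  have cheb : ∀ t, τ ≤ t → ∀ E > 0, Real.exp (-t * E) * N E ≤ L t := by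
    intro t ht E hE
    have htpos : 0 < t := lt_of_lt_of_le hτ ht
    have hmeasIoc : N.measure (Set.Ioc 0 E) = ENNReal.ofReal (N E) := by
      rw [N.measure_Ioc, hN0 0 le_rfl, sub_zero]
    have h1 : Real.exp (-t * E) * N E = ∫ _ in Set.Ioc (0:ℝ) E, Real.exp (-t * E) ∂N.measure := by
      rw [setIntegral_const, measureReal_def, hmeasIoc, ENNReal.toReal_ofReal (hNnonneg E), smul_eq_mul, mul_comm]
    rw [h1]
    have hi := hint t ht
    have hi' : IntegrableOn (fun x => Real.exp (-t * x)) (Set.Ioc 0 E) N.measure :=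
      hi.mono_set Set.Ioc_subset_Ioi_self
    have hconst : IntegrableOn (fun _ : ℝ => Real.exp (-t * E)) (Set.Ioc 0 E) N.measure := by
      exact integrableOn_const (by rw [hmeasIoc]; exact ENNReal.ofReal_ne_top)
    calc ∫ _ in Set.Ioc (0:ℝ) E, Real.exp (-t * E) ∂N.measure
        ≤ ∫ x in Set.Ioc (0:ℝ) E, Real.exp (-t * x) ∂N.measure := by
          refine setIntegral_mono_on hconst hi' measurableSet_Ioc fun x hx => ?_
          refine Real.exp_le_exp.2 ?_
          have := hx.2
          nlinarith
      _ ≤ L t := by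
          refine setIntegral_mono_set hi (ae_of_all _ fun x => (Real.exp_pos _).le) ?_
          exact HasSubset.Subset.eventuallyLE Set.Ioc_subset_Ioi_self
  -- some point of positivity
  obtain ⟨E₁, hE₁⟩ := hNne
  have hE₁pos : 0 < E₁ := by
    by_contra h
    exact hE₁ (hN0 E₁ (not_lt.1 h))
  have hNE₁ : 0 < N E₁ := lt_of_le_of_ne (hNnonneg E₁) (Ne.symm hE₁)
  have hLpos : ∀ t, τ ≤ t → 0 < L t := fun t ht =>
    lt_of_lt_of_le (mul_pos (Real.exp_pos _) hNE₁) (cheb t ht E₁ hE₁pos)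
  -- asymptotics
  have hu : Tendsto (fun s : ℝ => s * fs s) atTop atTop :=
    tendsto_id.atTop_mul_atTop₀ hfstop
  have htt : Tendsto (fun s : ℝ => (1/8 : ℝ) * (s * fs s)) atTop atTop :=
    hu.const_mul_atTop (by norm_num)
  have h1 : Tendsto (fun s : ℝ =>
      f ((1/8 : ℝ) * (s * fs s)) * Real.log (L ((1/8 : ℝ) * (s * fs s)))) atTop (nhds (-1)) :=
    hyp.comp htt
  have h2 : Tendsto (fun s : ℝ => f ((1/8 : ℝ) * (s * fs s)) / f (s * fs s)) atTop (nhds 1) :=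
    (hfslow (1/8) (by norm_num)).comp hu
  have h3 : Tendsto (fun s : ℝ => f ((1/8 : ℝ) * (s * fs s)) * fs s) atTop (nhds 1) := by
    have hmul : Tendsto (fun s : ℝ =>
        (f ((1/8 : ℝ) * (s * fs s)) / f (s * fs s)) * (fs s * f (s * fs s))) atTop (nhds 1) := by
      have := h2.mul hconj2
      simpa using this
    refine hmul.congr' ?_
    filter_upwards [hu.eventually_gt_atTop 0] with s hs
    have hfus : f (s * fs s) ≠ 0 := ne_of_gt (hfpos _ hs)
    field_simp
  -- eventual bounds
  have hev : ∀ᶠ s : ℝ in atTop,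
      τ ≤ (1/8 : ℝ) * (s * fs s) ∧
      f ((1/8 : ℝ) * (s * fs s)) * Real.log (L ((1/8 : ℝ) * (s * fs s))) ≤ -(7/8 : ℝ) ∧
      f ((1/8 : ℝ) * (s * fs s)) * fs s ≤ (9/8 : ℝ) ∧
      0 < s ∧ 0 < (1/8 : ℝ) * (s * fs s) := by
    filter_upwards [htt.eventually_ge_atTop τ,
      h1.eventually_le_const (show (-1 : ℝ) < -(7/8) by norm_num),
      h3.eventually_le_const (show (1 : ℝ) < 9/8 by norm_num),
      eventually_gt_atTop (0:ℝ), htt.eventually_gt_atTop 0] with s a b c d e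
    exact ⟨a, b, c, d, e⟩
  obtain ⟨s₀, hs₀⟩ := hev.exists_forall_of_atTop
  refine ⟨1 / (max s₀ 1), by positivity, fun E hE => ?_⟩
  set s : ℝ := 1 / E with hsdef
  have hEpos : 0 < E := hE.1
  have hs_ge : max s₀ 1 ≤ s := by
    have h01 : 0 < max s₀ 1 := lt_of_lt_of_le one_pos (le_max_right _ _)
    rw [hsdef, le_div_iff₀ hEpos]
    have h2' : max s₀ 1 * E ≤ max s₀ 1 * (1 / max s₀ 1) :=
      mul_le_mul_of_nonneg_left hE.2.le h01.le
    calc max s₀ 1 * E ≤ max s₀ 1 * (1 / max s₀ 1) := h2'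
      _ = 1 := mul_one_div_cancel (ne_of_gt h01)
  obtain ⟨ha, hb, hc, hd, he⟩ := hs₀ s (le_trans (le_max_left _ _) hs_ge)
  set t : ℝ := (1/8 : ℝ) * (s * fs s) with htdef
  have hft : 0 < f t := hfpos t he
  have hfss : 0 < fs s := hfspos s hd
  have hLt : 0 < L t := hLpos t ha
  -- log bound
  have hlog : Real.log (L t) ≤ -(7/8 : ℝ) / f t := by
    rw [le_div_iff₀ hft] at *
    nlinarith [hb]
  -- key inequality : t * E + log (L t) ≤ -(fs s)/2
  have htE : t * E = (1/8 : ℝ) * fs s := by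
    rw [htdef, hsdef]
    field_simp
  have hkey : t * E + Real.log (L t) ≤ -(fs s) / 2 := by
    have h5 : (5/8 : ℝ) * fs s ≤ (7/8 : ℝ) / f t := by
      rw [le_div_iff₀ hft]
      nlinarith [hc]
    have := hlog
    rw [htE]
    nlinarith [this, h5]
  -- conclude
  have hch := cheb t ha E hEpos
  have hNE : N E ≤ Real.exp (t * E) * L t := by
    have heq : Real.exp (t * E) * (Real.exp (-t * E) * N E) = N E := by
      rw [← mul_assoc, ← Real.exp_add]
      simp [neg_mul]
    calc (N E : ℝ) = Real.exp (t * E) * (Real.exp (-t * E) * N E) := heq.symm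
      _ ≤ Real.exp (t * E) * L t := mul_le_mul_of_nonneg_left hch (Real.exp_pos _).le
  calc N E ≤ Real.exp (t * E) * L t := hNE
    _ = Real.exp (t * E + Real.log (L t)) := by
        rw [Real.exp_add, Real.exp_log hLt]
    _ ≤ Real.exp (-(fs s) / 2) := Real.exp_le_exp.2 hkey
    _ = Real.exp (-(fs (1 / E)) / 2) := by rw [hsdef]
end
end

section
/- Let f : (0,∞) → (0,∞) be measurable and slowly varying. Then for every A > 1 and every δ > 0 there exists T > 0 such that f(t)/f(s) ≤ A · max{(t/s)^δ, (t/s)^{−δ}} for all t, s ≥ T. -/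
open Filter Real Pointwise

noncomputable section

/-- The uniform convergence theorem for additively slowly varying measurable functions. -/
theorem stmt_17_uct (g : ℝ → ℝ) (hg : Measurable g)
    (h : ∀ u : ℝ, Tendsto (fun x => g (x + u) - g x) atTop (nhds 0)) :
    ∀ ε > (0:ℝ), ∃ X : ℝ, ∀ x ≥ X, ∀ u ∈ Set.Icc (0:ℝ) 1, |g (x + u) - g x| ≤ ε := by
  intro ε hε
  by_contra hcon
  push_neg at hcon
  choose x hx u hu hbad using fun n : ℕ => hcon n
  have hxt : Tendsto x atTop atTop :=
    tendsto_atTop_mono hx tendsto_natCast_atTop_atTop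
  have hxut : Tendsto (fun n => x n + u n) atTop atTop :=
    tendsto_atTop_mono (fun n => le_add_of_nonneg_right (hu n).1) hxt
  set F : ℕ → ℝ → ℝ := fun n s => g (x n + s) - g (x n) with hF
  set K : ℕ → ℝ → ℝ := fun n s => g (x n + u n + s) - g (x n + u n) with hK
  have hFm : ∀ n, MeasureTheory.StronglyMeasurable (F n) := fun n =>
    ((hg.comp (measurable_const_add (x n))).sub measurable_const).stronglyMeasurable
  have hKm : ∀ n, MeasureTheory.StronglyMeasurable (K n) := fun n =>
    ((hg.comp (measurable_const_add (x n + u n))).sub measurable_const).stronglyMeasurable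
  have hIm : MeasurableSet (Set.Icc (0:ℝ) 2) := measurableSet_Icc
  have hInt : MeasureTheory.volume (Set.Icc (0:ℝ) 2) ≠ ⊤ := by
    rw [Real.volume_Icc]; exact ENNReal.ofReal_ne_top
  have hFp : ∀ᵐ s ∂MeasureTheory.volume, s ∈ Set.Icc (0:ℝ) 2 →
      Tendsto (fun n => F n s) atTop (nhds ((fun _ : ℝ => (0:ℝ)) s)) := by
    refine MeasureTheory.ae_of_all _ (fun s _ => ?_)
    exact (h s).comp hxt
  have hKp : ∀ᵐ s ∂MeasureTheory.volume, s ∈ Set.Icc (0:ℝ) 2 →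
      Tendsto (fun n => K n s) atTop (nhds ((fun _ : ℝ => (0:ℝ)) s)) := by
    refine MeasureTheory.ae_of_all _ (fun s _ => ?_)
    exact (h s).comp hxut
  have hq : (0:ℝ) < 1/4 := by norm_num
  obtain ⟨t1, ht1sub, ht1m, ht1le, ht1u⟩ :=
    MeasureTheory.tendstoUniformlyOn_of_ae_tendsto hFm (measurable_const (a := (0:ℝ))).stronglyMeasurable
      hIm hInt hFp hq
  obtain ⟨t2, ht2sub, ht2m, ht2le, ht2u⟩ :=
    MeasureTheory.tendstoUniformlyOn_of_ae_tendsto hKm (measurable_const (a := (0:ℝ))).stronglyMeasurable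
      hIm hInt hKp hq
  set S : Set ℝ := Set.Icc (0:ℝ) 2 \ t1 with hS
  set S' : Set ℝ := Set.Icc (0:ℝ) 2 \ t2 with hS'
  -- extract uniform bounds
  rw [Metric.tendstoUniformlyOn_iff] at ht1u ht2u
  obtain ⟨N1, hN1⟩ := (ht1u (ε/2) (by linarith)).exists_forall_of_atTop
  obtain ⟨N2, hN2⟩ := (ht2u (ε/2) (by linarith)).exists_forall_of_atTop
  set n := max N1 N2 with hn
  -- the translated set
  set V : Set ℝ := u n +ᵥ S' with hV
  have hmeasV : MeasureTheory.volume V = MeasureTheory.volume S' := by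
    rw [hV]; exact MeasureTheory.measure_vadd _ _ _
  have hSlow : ENNReal.ofReal 2 ≤ MeasureTheory.volume S + ENNReal.ofReal (1/4) := by
    calc ENNReal.ofReal 2 = MeasureTheory.volume (Set.Icc (0:ℝ) 2) := by
          rw [Real.volume_Icc]; norm_num
      _ ≤ MeasureTheory.volume (S ∪ t1) := by
          apply MeasureTheory.measure_mono
          intro z hz
          by_cases hzt : z ∈ t1
          · exact Or.inr hzt
          · exact Or.inl ⟨hz, hzt⟩
      _ ≤ MeasureTheory.volume S + MeasureTheory.volume t1 := MeasureTheory.measure_union_le _ _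
      _ ≤ MeasureTheory.volume S + ENNReal.ofReal (1/4) := by exact add_le_add_right ht1le _
  have hS'low : ENNReal.ofReal 2 ≤ MeasureTheory.volume S' + ENNReal.ofReal (1/4) := by
    calc ENNReal.ofReal 2 = MeasureTheory.volume (Set.Icc (0:ℝ) 2) := by
          rw [Real.volume_Icc]; norm_num
      _ ≤ MeasureTheory.volume (S' ∪ t2) := by
          apply MeasureTheory.measure_mono
          intro z hz
          by_cases hzt : z ∈ t2
          · exact Or.inr hzt
          · exact Or.inl ⟨hz, hzt⟩
      _ ≤ MeasureTheory.volume S' + MeasureTheory.volume t2 := MeasureTheory.measure_union_le _ _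
      _ ≤ MeasureTheory.volume S' + ENNReal.ofReal (1/4) := by exact add_le_add_right ht2le _
  have hSV : (S ∩ V).Nonempty := by
    by_contra hne
    rw [Set.not_nonempty_iff_eq_empty] at hne
    have hdisj : Disjoint S V := Set.disjoint_iff_inter_eq_empty.mpr hne
    have hVm : MeasurableSet V := (hIm.diff ht2m).const_vadd (u n)
    have hsub : S ∪ V ⊆ Set.Icc (0:ℝ) 3 := by
      rintro z (hz | hz)
      · exact ⟨hz.1.1, by linarith [hz.1.2]⟩
      · obtain ⟨y, hy, rfl⟩ := hz
        have h1 := (hu n).1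
        have h2 := (hu n).2
        have h3 := hy.1.1
        have h4 := hy.1.2
        constructor
        · simp only [vadd_eq_add]; linarith
        · simp only [vadd_eq_add]; linarith
    have hle : MeasureTheory.volume S + MeasureTheory.volume S' ≤ ENNReal.ofReal 3 := by
      rw [← hmeasV, ← MeasureTheory.measure_union hdisj hVm]
      calc MeasureTheory.volume (S ∪ V) ≤ MeasureTheory.volume (Set.Icc (0:ℝ) 3) :=
            MeasureTheory.measure_mono hsub
        _ = ENNReal.ofReal 3 := by rw [Real.volume_Icc]; norm_num
    have hbig : ENNReal.ofReal 2 + ENNReal.ofReal 2 ≤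
        MeasureTheory.volume S + MeasureTheory.volume S' +
          (ENNReal.ofReal (1/4) + ENNReal.ofReal (1/4)) := by
      calc ENNReal.ofReal 2 + ENNReal.ofReal 2
          ≤ (MeasureTheory.volume S + ENNReal.ofReal (1/4)) +
            (MeasureTheory.volume S' + ENNReal.ofReal (1/4)) := add_le_add hSlow hS'low
        _ = MeasureTheory.volume S + MeasureTheory.volume S' +
            (ENNReal.ofReal (1/4) + ENNReal.ofReal (1/4)) := by ring
    have : ENNReal.ofReal 2 + ENNReal.ofReal 2 ≤
        ENNReal.ofReal 3 + (ENNReal.ofReal (1/4) + ENNReal.ofReal (1/4)) :=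
      hbig.trans (add_le_add_left hle _)
    rw [← ENNReal.ofReal_add (by norm_num) (by norm_num), ← ENNReal.ofReal_add (by norm_num)
      (by norm_num), ← ENNReal.ofReal_add (by norm_num) (by norm_num)] at this
    rw [ENNReal.ofReal_le_ofReal_iff (by norm_num)] at this
    norm_num at this
  obtain ⟨s₀, hs₀S, hs₀V⟩ := hSV
  obtain ⟨y, hyS', hyv⟩ := hs₀V
  have hyv' : u n + y = s₀ := hyv
  have hFb : |F n s₀| < ε/2 := by
    have := hN1 n (le_max_left _ _) s₀ hs₀S
    simpa [Real.dist_eq, zero_sub, abs_neg] using this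
  have hKb : |K n y| < ε/2 := by
    have := hN2 n (le_max_right _ _) y hyS'
    simpa [Real.dist_eq, zero_sub, abs_neg] using this
  have hkey : g (x n + u n) - g (x n) = F n s₀ - K n y := by
    simp only [hF, hK]
    rw [show x n + u n + y = x n + s₀ by rw [← hyv']; ring]
    ring
  have : |g (x n + u n) - g (x n)| < ε := by
    rw [hkey]
    calc |F n s₀ - K n y| ≤ |F n s₀| + |K n y| := abs_sub _ _
      _ < ε/2 + ε/2 := add_lt_add hFb hKb
      _ = ε := by ring
  exact absurd (hbad n) (not_lt.mpr this.le)

theorem stmt_17_chain (g : ℝ → ℝ) (ε X : ℝ)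
    (h : ∀ x ≥ X, ∀ u ∈ Set.Icc (0:ℝ) 1, |g (x + u) - g x| ≤ ε) :
    ∀ n : ℕ, ∀ x ≥ X, ∀ y, x ≤ y → y ≤ x + n → |g y - g x| ≤ ε * n := by
  intro n
  induction n with
  | zero =>
    intro x hx y h1 h2
    have hyx : y = x := le_antisymm (by simpa using h2) h1
    simp [hyx]
  | succ n ih =>
    intro x hx y h1 h2
    have hε0 : 0 ≤ ε := by simpa using h x hx 0 ⟨le_refl _, zero_le_one⟩
    by_cases hc : y ≤ x + 1
    · have hstep := h x hx (y - x) ⟨by linarith, by linarith⟩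
      rw [show x + (y - x) = y by ring] at hstep
      calc |g y - g x| ≤ ε := hstep
        _ ≤ ε * ((n:ℝ) + 1) := by nlinarith
        _ = ε * ((n + 1 : ℕ) : ℝ) := by push_cast; ring
      -- cast handled below
    · push_neg at hc
      have hstep := h x hx 1 ⟨zero_le_one, le_refl 1⟩
      have hih := ih (x + 1) (by linarith) y (by linarith)
        (by push_cast at h2 ⊢; linarith)
      calc |g y - g x| = |(g y - g (x + 1)) + (g (x + 1) - g x)| := by
            rw [sub_add_sub_cancel]
        _ ≤ |g y - g (x + 1)| + |g (x + 1) - g x| := abs_add_le _ _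
        _ ≤ ε * n + ε := add_le_add hih hstep
        _ = ε * (n + 1 : ℕ) := by push_cast; ring

/-- Potter bounds: if `f` is slowly varying, then for any `A > 1`, `δ > 0` there is `T > 0`
such that `f(t)/f(s) ≤ A max{(t/s)^δ, (t/s)^{-δ}}` for all `t, s ≥ T`. -/
theorem stmt_17
    (f : ℝ → ℝ) (hfpos : ∀ t > 0, 0 < f t) (hfmeas : Measurable f)
    (hslow : ∀ c > 0, Tendsto (fun t : ℝ => f (c * t) / f t) atTop (nhds 1)) :
    ∀ A > (1 : ℝ), ∀ δ > (0 : ℝ), ∃ T > (0 : ℝ), ∀ t ≥ T, ∀ s ≥ T,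
      f t / f s ≤ A * max ((t / s) ^ δ) ((t / s) ^ (-δ)) := by
  intro A hA δ hδ
  set g : ℝ → ℝ := fun x => Real.log (f (Real.exp x)) with hg
  have hgm : Measurable g := (Real.measurable_log.comp (hfmeas.comp Real.measurable_exp))
  have hadd : ∀ u : ℝ, Tendsto (fun x => g (x + u) - g x) atTop (nhds 0) := by
    intro u
    have h2 : Tendsto (fun x : ℝ => f (Real.exp u * Real.exp x) / f (Real.exp x)) atTop
        (nhds 1) := (hslow _ (Real.exp_pos u)).comp Real.tendsto_exp_atTop
    have h3 := (Real.continuousAt_log one_ne_zero).tendsto.comp h2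
    rw [Real.log_one] at h3
    apply h3.congr
    intro x
    show Real.log (f (Real.exp u * Real.exp x) / f (Real.exp x)) = g (x + u) - g x
    rw [Real.log_div (hfpos _ (by positivity)).ne' (hfpos _ (Real.exp_pos x)).ne']
    simp only [hg]
    rw [Real.exp_add, mul_comm (Real.exp x)]
  set ε : ℝ := min (Real.log A) δ with hε
  have hε0 : 0 < ε := lt_min (Real.log_pos hA) hδ
  obtain ⟨X, hX⟩ := stmt_17_uct g hgm hadd ε hε0
  refine ⟨Real.exp X, Real.exp_pos X, ?_⟩
  intro t ht s hs
  have ht0 : (0:ℝ) < t := lt_of_lt_of_le (Real.exp_pos X) ht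
  have hs0 : (0:ℝ) < s := lt_of_lt_of_le (Real.exp_pos X) hs
  set y := Real.log t with hy
  set x := Real.log s with hx
  have hxX : X ≤ x := (Real.le_log_iff_exp_le hs0).mpr hs
  have hyX : X ≤ y := (Real.le_log_iff_exp_le ht0).mpr ht
  set n : ℕ := ⌈|y - x|⌉₊ with hn
  have habs : |g y - g x| ≤ ε * n := by
    rcases le_total x y with hc | hc
    · refine stmt_17_chain g ε X hX n x hxX y hc ?_
      have h1 : y - x ≤ (n : ℝ) := le_trans (le_abs_self _) (Nat.le_ceil _)
      linarith
    · rw [abs_sub_comm]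
      refine stmt_17_chain g ε X hX n y hyX x hc ?_
      have h1 : x - y ≤ (n : ℝ) := le_trans (by rw [abs_sub_comm]; exact le_abs_self _)
        (Nat.le_ceil _)
      linarith
  have hnle : (n : ℝ) ≤ |y - x| + 1 := (Nat.ceil_lt_add_one (abs_nonneg _)).le
  have hεA : ε ≤ Real.log A := min_le_left _ _
  have hεδ : ε ≤ δ := min_le_right _ _
  have hmain : g y - g x ≤ Real.log A + δ * |y - x| := by
    have h1 : g y - g x ≤ ε * n := le_trans (le_abs_self _) habs
    have h2 : ε * (n:ℝ) ≤ ε * (|y - x| + 1) := by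
      apply mul_le_mul_of_nonneg_left hnle hε0.le
    have h3 : ε * (|y - x| + 1) ≤ Real.log A + δ * |y - x| := by
      have habs0 : 0 ≤ |y - x| := abs_nonneg _
      nlinarith
    linarith
  have hftfs : f t / f s = Real.exp (g y - g x) := by
    rw [Real.exp_sub]
    simp only [hg]
    rw [hy, hx, Real.exp_log ht0, Real.exp_log hs0,
      Real.exp_log (hfpos t ht0), Real.exp_log (hfpos s hs0)]
  have hrhs : A * max ((t / s) ^ δ) ((t / s) ^ (-δ)) =
      Real.exp (Real.log A + δ * |y - x|) := by
    have hts : (0:ℝ) < t / s := div_pos ht0 hs0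
    have hlog : Real.log (t / s) = y - x := Real.log_div ht0.ne' hs0.ne'
    rw [Real.rpow_def_of_pos hts, Real.rpow_def_of_pos hts, hlog]
    rw [show (y - x) * (-δ) = -((y - x) * δ) by ring]
    rw [← Real.exp_monotone.map_max, ← abs_eq_max_neg, abs_mul, abs_of_pos hδ,
      Real.exp_add, Real.exp_log (by linarith : (0:ℝ) < A), mul_comm |y - x| δ]
  rw [hftfs, hrhs]
  exact Real.exp_le_exp.mpr hmain
end
end

section
/- Let f : (0,∞) → (0,∞) be measurable and slowly varying, and assume lim_{t→∞} f(t·f(t))/f(t) = 1. Then also lim_{t→∞} f(t/f(t))/f(t) = 1; consequently the pair (f, 1/f) is a de Bruijn conjugate pair, i.e. the function g := 1/f is slowly varying and satisfies lim_{t→∞} f(t)·g(t f(t)) = 1 and lim_{t→∞} g(t)·f(t g(t)) = 1. -/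
open Filter Real MeasureTheory Set

noncomputable section

/-- Egorov-based "single bounded shift" lemma for additively slowly varying functions. -/
lemma egorov_shift (ψ : ℝ → ℝ) (hmeas : Measurable ψ)
    (hA : ∀ a : ℝ, Tendsto (fun x => ψ (x + a) - ψ x) atTop (nhds 0))
    (x u : ℕ → ℝ) (hx : Tendsto x atTop atTop) (hu : ∀ n, |u n| ≤ 1) :
    Tendsto (fun n => ψ (x n + u n) - ψ (x n)) atTop (nhds 0) := by
  have hxu : Tendsto (fun n => x n + u n) atTop atTop := by
    apply tendsto_atTop_mono (f := fun n => x n + (-1))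
    · intro n
      have := (abs_le.mp (hu n)).1
      linarith
    · exact tendsto_atTop_add_const_right _ _ hx
  set F : ℕ → ℝ → ℝ := fun n v => ψ (x n + v) - ψ (x n) with hF
  set H : ℕ → ℝ → ℝ := fun n v => ψ (x n + u n + v) - ψ (x n + u n) with hH
  have hFm : ∀ n, StronglyMeasurable (F n) := fun n =>
    ((hmeas.comp (measurable_const_add (x n))).sub measurable_const).stronglyMeasurable
  have hHm : ∀ n, StronglyMeasurable (H n) := fun n =>
    ((hmeas.comp (measurable_const_add (x n + u n))).sub measurable_const).stronglyMeasurable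
  have hsm : MeasurableSet (Icc (0:ℝ) 4) := measurableSet_Icc
  have hsvol : volume (Icc (0:ℝ) 4) ≠ ⊤ := by
    rw [Real.volume_Icc]; exact ENNReal.ofReal_ne_top
  have hFp : ∀ᵐ v ∂(volume : Measure ℝ), v ∈ Icc (0:ℝ) 4 →
      Tendsto (fun n => F n v) atTop (nhds ((0:ℝ → ℝ) v)) := by
    refine Filter.Eventually.of_forall (fun v _ => ?_)
    exact (hA v).comp hx
  have hHp : ∀ᵐ v ∂(volume : Measure ℝ), v ∈ Icc (0:ℝ) 4 →
      Tendsto (fun n => H n v) atTop (nhds ((0:ℝ → ℝ) v)) := by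
    refine Filter.Eventually.of_forall (fun v _ => ?_)
    exact (hA v).comp hxu
  obtain ⟨t1, ht1s, ht1m, ht1v, ht1u⟩ :=
    tendstoUniformlyOn_of_ae_tendsto (μ := volume) hFm
      (stronglyMeasurable_const : StronglyMeasurable (0 : ℝ → ℝ)) hsm hsvol hFp (by norm_num : (0:ℝ) < 1/2)
  obtain ⟨t2, ht2s, ht2m, ht2v, ht2u⟩ :=
    tendstoUniformlyOn_of_ae_tendsto (μ := volume) hHm
      (stronglyMeasurable_const : StronglyMeasurable (0 : ℝ → ℝ)) hsm hsvol hHp (by norm_num : (0:ℝ) < 1/2)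
  set T1 : Set ℝ := Icc (0:ℝ) 4 \ t1 with hT1
  set T2 : Set ℝ := Icc (0:ℝ) 4 \ t2 with hT2
  have hT1m : MeasurableSet T1 := hsm.diff ht1m
  have hT2m : MeasurableSet T2 := hsm.diff ht2m
  have hTvol : ∀ (t : Set ℝ), volume t ≤ ENNReal.ofReal (1/2) →
      ENNReal.ofReal (7/2) ≤ volume (Icc (0:ℝ) 4 \ t) := by
    intro t htv
    refine le_trans ?_ le_measure_diff
    have h4 : volume (Icc (0:ℝ) 4) = ENNReal.ofReal 4 := by
      rw [Real.volume_Icc]; norm_num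
    rw [h4]
    calc ENNReal.ofReal (7/2) = ENNReal.ofReal 4 - ENNReal.ofReal (1/2) := by
          rw [← ENNReal.ofReal_sub _ (by norm_num)]; norm_num
      _ ≤ ENNReal.ofReal 4 - volume t := tsub_le_tsub_left htv _
  have hT1v : ENNReal.ofReal (7/2) ≤ volume T1 := hTvol t1 ht1v
  have hT2v : ENNReal.ofReal (7/2) ≤ volume T2 := hTvol t2 ht2v
  -- choose common points
  have hkey : ∀ n, ∃ v, v ∈ T1 ∧ v - u n ∈ T2 := by
    intro n
    set A2 : Set ℝ := (fun v => v + (-(u n))) ⁻¹' T2 with hA2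
    have hA2m : MeasurableSet A2 := hT2m.preimage (measurable_add_const _)
    have hA2v : volume A2 = volume T2 := measure_preimage_add_right _ _ _
    have hsub : T1 ∪ A2 ⊆ Icc (-1:ℝ) 5 := by
      intro v hv
      rcases hv with hv | hv
      · have := ht1s  -- unused
        have hv' : v ∈ Icc (0:ℝ) 4 := hv.1
        exact ⟨by linarith [hv'.1], by linarith [hv'.2]⟩
      · have hv' : v + (-(u n)) ∈ Icc (0:ℝ) 4 := hv.1
        have h1 := (abs_le.mp (hu n)).1
        have h2 := (abs_le.mp (hu n)).2
        exact ⟨by linarith [hv'.1], by linarith [hv'.2]⟩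
    have hne : volume (T1 ∩ A2) ≠ 0 := by
      intro h0
      have hun : volume (T1 ∪ A2) + volume (T1 ∩ A2) = volume T1 + volume A2 :=
        measure_union_add_inter T1 hA2m
      have h7 : ENNReal.ofReal 7 ≤ volume (T1 ∪ A2) := by
        rw [h0, add_zero] at hun
        rw [hun, hA2v]
        calc ENNReal.ofReal 7 = ENNReal.ofReal (7/2) + ENNReal.ofReal (7/2) := by
              rw [← ENNReal.ofReal_add (by norm_num) (by norm_num)]; norm_num
          _ ≤ volume T1 + volume T2 := add_le_add hT1v hT2v
      have h6 : volume (T1 ∪ A2) ≤ ENNReal.ofReal 6 := by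
        refine le_trans (measure_mono hsub) ?_
        rw [Real.volume_Icc]; norm_num
      have : ENNReal.ofReal 7 ≤ ENNReal.ofReal 6 := le_trans h7 h6
      rw [ENNReal.ofReal_le_ofReal_iff (by norm_num)] at this
      linarith
    obtain ⟨v, hv⟩ := nonempty_of_measure_ne_zero hne
    refine ⟨v, hv.1, ?_⟩
    have : v + (-(u n)) ∈ T2 := hv.2
    simpa [sub_eq_add_neg] using this
  choose v hv1 hv2 using hkey
  -- convergence of the two auxiliary sequences
  have hgen : ∀ (G : ℕ → ℝ → ℝ) (T : Set ℝ) (w : ℕ → ℝ),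
      TendstoUniformlyOn G 0 atTop T → (∀ n, w n ∈ T) →
      Tendsto (fun n => G n (w n)) atTop (nhds 0) := by
    intro G T w hG hw
    rw [Metric.tendsto_atTop]
    intro ε hε
    obtain ⟨N, hN⟩ := eventually_atTop.mp (Metric.tendstoUniformlyOn_iff.mp hG ε hε)
    refine ⟨N, fun n hn => ?_⟩
    have := hN n hn (w n) (hw n)
    rw [dist_comm]
    simpa using this
  have hFv : Tendsto (fun n => F n (v n)) atTop (nhds 0) := hgen F T1 v ht1u hv1
  have hHv : Tendsto (fun n => H n (v n - u n)) atTop (nhds 0) :=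
    hgen H T2 (fun n => v n - u n) ht2u hv2
  have heq : (fun n => ψ (x n + u n) - ψ (x n)) =
      fun n => F n (v n) - H n (v n - u n) := by
    funext n
    simp only [hF, hH]
    ring_nf
  rw [heq]
  simpa using hFv.sub hHv

/-- Uniform (over shifts in `[-1,1]`) version of slow variation. -/
lemma uct_one (ψ : ℝ → ℝ) (hmeas : Measurable ψ)
    (hA : ∀ a : ℝ, Tendsto (fun x => ψ (x + a) - ψ x) atTop (nhds 0))
    {ε : ℝ} (hε : 0 < ε) :
    ∃ X : ℝ, ∀ x ≥ X, ∀ u : ℝ, |u| ≤ 1 → |ψ (x + u) - ψ x| ≤ ε := by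
  by_contra h
  push_neg at h
  have hsel : ∀ n : ℕ, ∃ p : ℝ × ℝ, p.1 ≥ (n:ℝ) ∧ |p.2| ≤ 1 ∧ ε < |ψ (p.1 + p.2) - ψ p.1| := by
    intro n
    obtain ⟨x, hx, u, hu, hgt⟩ := h n
    exact ⟨(x, u), hx, hu, hgt⟩
  choose p hp1 hp2 hp3 using hsel
  have hx : Tendsto (fun n => (p n).1) atTop atTop :=
    tendsto_atTop_mono hp1 tendsto_natCast_atTop_atTop
  have := egorov_shift ψ hmeas hA (fun n => (p n).1) (fun n => (p n).2) hx hp2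
  rw [Metric.tendsto_atTop] at this
  obtain ⟨N, hN⟩ := this ε hε
  have h1 := hN N le_rfl
  have h2 := hp3 N
  rw [Real.dist_eq, sub_zero] at h1
  linarith

/-- Chaining: distant values differ by at most `ε * (gap + 2)`. -/
lemma chaining (ψ : ℝ → ℝ) (hmeas : Measurable ψ)
    (hA : ∀ a : ℝ, Tendsto (fun x => ψ (x + a) - ψ x) atTop (nhds 0))
    {ε : ℝ} (hε : 0 < ε) :
    ∃ X : ℝ, ∀ x y : ℝ, X ≤ x → x ≤ y → |ψ y - ψ x| ≤ ε * (y - x + 2) := by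
  obtain ⟨X, hX⟩ := uct_one ψ hmeas hA hε
  refine ⟨X, ?_⟩
  have key : ∀ n : ℕ, ∀ x : ℝ, X ≤ x → ∀ u : ℝ, 0 ≤ u → u ≤ (n:ℝ) + 1 →
      |ψ (x + u) - ψ x| ≤ ε * ((n:ℝ) + 1) := by
    intro n
    induction n with
    | zero =>
      intro x hx u hu0 hu1
      have := hX x hx u (abs_le.mpr ⟨by linarith, by norm_num at hu1 ⊢; linarith⟩)
      simpa using this
    | succ m ih =>
      intro x hx u hu0 hu1
      by_cases hc : u ≤ (m:ℝ) + 1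
      · refine le_trans (ih x hx u hu0 hc) ?_
        push_cast
        nlinarith [hε.le, Nat.cast_nonneg (α := ℝ) m]
      · push_neg at hc
        have h1 : |ψ (x + (u - 1)) - ψ x| ≤ ε * ((m:ℝ) + 1) := by
          refine ih x hx (u - 1) (by push_cast at hc ⊢; linarith [Nat.cast_nonneg (α := ℝ) m]) ?_
          push_cast at hu1 ⊢; linarith
        have h2 : |ψ (x + u) - ψ (x + (u - 1))| ≤ ε := by
          have hbase : X ≤ x + (u - 1) := by
            have : (0:ℝ) ≤ (m:ℝ) := Nat.cast_nonneg m
            linarith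
          have := hX (x + (u - 1)) hbase 1 (by norm_num)
          have harg : x + (u - 1) + 1 = x + u := by ring
          rwa [harg] at this
        calc |ψ (x + u) - ψ x|
            ≤ |ψ (x + u) - ψ (x + (u - 1))| + |ψ (x + (u - 1)) - ψ x| := abs_sub_le _ _ _
          _ ≤ ε + ε * ((m:ℝ) + 1) := add_le_add h2 h1
          _ = ε * (((m:ℕ):ℝ) + 1 + 1) := by ring
          _ = ε * ((((m+1):ℕ):ℝ) + 1) := by push_cast; ring
  intro x y hx hxy
  set u := y - x with huv
  have hu0 : 0 ≤ u := by linarith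
  set n := Nat.ceil u with hn
  have hun : u ≤ (n:ℝ) + 1 := le_trans (Nat.le_ceil u) (by linarith)
  have hcb : (n:ℝ) ≤ u + 1 := by
    have := Nat.ceil_lt_add_one (by exact hu0)
    linarith
  have := key n x hx u hu0 hun
  have hyx : x + u = y := by ring
  rw [hyx] at this
  calc |ψ y - ψ x| ≤ ε * ((n:ℝ) + 1) := this
    _ ≤ ε * (y - x + 2) := by nlinarith [hε.le]

/-- Sublinearity of an additively slowly varying function. -/
lemma sublinear (ψ : ℝ → ℝ) (hmeas : Measurable ψ)
    (hA : ∀ a : ℝ, Tendsto (fun x => ψ (x + a) - ψ x) atTop (nhds 0))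
    {ε : ℝ} (hε : 0 < ε) :
    ∃ X C : ℝ, 0 ≤ C ∧ ∀ x ≥ X, |ψ x| ≤ C + ε * x := by
  obtain ⟨X, hX⟩ := chaining ψ hmeas hA hε
  refine ⟨X, |ψ X| + 2 * ε + ε * |X|, by positivity, fun x hx => ?_⟩
  have h := hX X x le_rfl hx
  have h1 : |ψ x| ≤ |ψ X| + ε * (x - X + 2) := by
    have := abs_sub_abs_le_abs_sub (ψ x) (ψ X)
    linarith
  have h2 : -X ≤ |X| := neg_le_abs X
  nlinarith [hε.le]

/-- Asymptotic surjectivity of `x ↦ x + ψ x`. -/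
lemma surj (ψ : ℝ → ℝ) (hmeas : Measurable ψ)
    (hA : ∀ a : ℝ, Tendsto (fun x => ψ (x + a) - ψ x) atTop (nhds 0))
    {ε : ℝ} (hε : 0 < ε) (hε2 : ε ≤ 1/2) :
    ∃ Z : ℝ, ∀ z ≥ Z, ∃ s, z/4 ≤ s ∧ z < s + ψ s ∧ s + ψ s ≤ z + 5 * ε := by
  obtain ⟨Xc, hXc⟩ := chaining ψ hmeas hA hε
  obtain ⟨Xs, C, hC0, hCs⟩ := sublinear ψ hmeas hA (by norm_num : (0:ℝ) < 1/2)
  set X := max Xc Xs with hXdef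
  refine ⟨max (8 * C / 5 + 1) (C + 3/2 * (X + 1)), fun z hz => ?_⟩
  have hz1 : 8 * C / 5 + 1 ≤ z := le_trans (le_max_left _ _) hz
  have hz2 : C + 3/2 * (X + 1) ≤ z := le_trans (le_max_right _ _) hz
  set S : Set ℝ := {t | X ≤ t ∧ z < t + ψ t} with hS
  have hSne : S.Nonempty := by
    refine ⟨max X (2 * z + 2 * C + 1), le_max_left _ _, ?_⟩
    set t := max X (2 * z + 2 * C + 1) with ht
    have ht1 : X ≤ t := le_max_left _ _
    have ht2 : 2 * z + 2 * C + 1 ≤ t := le_max_right _ _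
    have hψ : |ψ t| ≤ C + (1/2) * t := hCs t (le_trans (le_max_right Xc Xs) ht1)
    have := (abs_le.mp hψ).1
    linarith
  have hSbdd : BddBelow S := ⟨X, fun t ht => ht.1⟩
  set x₀ := sInf S with hx₀
  have hx₀X : X ≤ x₀ := le_csInf hSne (fun t ht => ht.1)
  have hx₀lb : 2 * (z - C) / 3 ≤ x₀ := by
    refine le_csInf hSne (fun t ht => ?_)
    have htX : X ≤ t := ht.1
    have hψ : |ψ t| ≤ C + (1/2) * t := hCs t (le_trans (le_max_right Xc Xs) htX)
    have := (abs_le.mp hψ).2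
    have := ht.2
    linarith
  obtain ⟨s, hsS, hslt⟩ := Real.lt_sInf_add_pos hSne hε
  have hsx₀ : x₀ ≤ s := csInf_le hSbdd hsS
  refine ⟨s, ?_, hsS.2, ?_⟩
  · -- z/4 ≤ s
    have : z / 4 ≤ 2 * (z - C) / 3 := by linarith
    linarith
  · -- upper bound
    set t := x₀ - ε with htdef
    have htX : X ≤ t := by
      have : X + 1 ≤ x₀ := by
        have : C + 3/2 * (X + 1) ≤ z := hz2
        linarith
      linarith
    have htnS : t ∉ S := fun h => absurd (csInf_le hSbdd h) (by simp [htdef]; linarith)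
    have htle : t + ψ t ≤ z := by
      by_contra hcon
      push_neg at hcon
      exact htnS ⟨htX, hcon⟩
    have hst : t ≤ s := by linarith
    have hchain : |ψ s - ψ t| ≤ ε * (s - t + 2) :=
      hXc t s (le_trans (le_max_left Xc Xs) htX) hst
    have hstb : s - t ≤ 2 * ε := by linarith
    have := (abs_le.mp hchain).2
    nlinarith [hε.le]

/-- Main additive statement: `ψ(z - ψ z) - ψ z → 0`. -/
lemma main_additive (ψ : ℝ → ℝ) (hmeas : Measurable ψ)
    (hA : ∀ a : ℝ, Tendsto (fun x => ψ (x + a) - ψ x) atTop (nhds 0))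
    (hFix : Tendsto (fun x => ψ (x + ψ x) - ψ x) atTop (nhds 0)) :
    Tendsto (fun z => ψ (z - ψ z) - ψ z) atTop (nhds 0) := by
  rw [Metric.tendsto_atTop]
  intro η hη
  set ε := min (η / 9) (1/5) with hεdef
  have hε : 0 < ε := lt_min (by linarith) (by norm_num)
  have hε5 : ε ≤ 1/5 := min_le_right _ _
  have hεη : ε ≤ η / 9 := min_le_left _ _
  obtain ⟨Xc, hXc⟩ := chaining ψ hmeas hA hε
  obtain ⟨Z, hZ⟩ := surj ψ hmeas hA hε (by linarith)
  obtain ⟨S₀, hS₀⟩ := (Metric.tendsto_atTop.mp hFix) ε hε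
  refine ⟨max (max Z Xc) (max (4 * S₀) (4 * (Xc + 2))), fun z hz => ?_⟩
  have hzZ : Z ≤ z := le_trans (le_trans (le_max_left _ _) (le_max_left _ _)) hz
  have hzXc : Xc ≤ z := le_trans (le_trans (le_max_right _ _) (le_max_left _ _)) hz
  have hzS₀ : 4 * S₀ ≤ z := le_trans (le_trans (le_max_left _ _) (le_max_right _ _)) hz
  have hzXc2 : 4 * (Xc + 2) ≤ z := le_trans (le_trans (le_max_right _ _) (le_max_right _ _)) hz
  obtain ⟨s, hs4, hslt, hsle⟩ := hZ z hzZ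
  set r := s + ψ s - z with hrdef
  have hr0 : 0 < r := by linarith
  have hr5 : r ≤ 5 * ε := by linarith
  have hr1 : r ≤ 1 := by linarith
  have hsS₀ : S₀ ≤ s := by linarith
  have hfix_s : |ψ (s + ψ s) - ψ s| ≤ ε := by
    have := hS₀ s hsS₀
    rw [Real.dist_eq, sub_zero] at this
    linarith
  have hzr : s + ψ s = z + r := by rw [hrdef]; ring
  have hfix_s' : |ψ (z + r) - ψ s| ≤ ε := by rwa [hzr] at hfix_s
  have hch1 : |ψ (z + r) - ψ z| ≤ ε * (r + 2) := by
    have := hXc z (z + r) hzXc (by linarith)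
    rwa [show z + r - z = r by ring] at this
  have hch1' : |ψ (z + r) - ψ z| ≤ 3 * ε := by nlinarith
  have hψzs : |ψ z - ψ s| ≤ 4 * ε := by
    have := abs_sub_le (ψ z) (ψ (z + r)) (ψ s)
    rw [abs_sub_comm (ψ z) (ψ (z + r))] at this
    linarith
  set δ := ψ s - r - ψ z with hδdef
  have hδabs : |δ| ≤ 9 * ε := by
    rw [hδdef, abs_le]
    have h := abs_le.mp hψzs
    constructor <;> [nlinarith; nlinarith]
  have hsδ : s + δ = z - ψ z := by rw [hδdef, hrdef]; ring
  have hδlb : -(9 * ε) ≤ δ := (abs_le.mp hδabs).1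
  have hδ2 : -2 ≤ δ := by linarith
  have hsXc : Xc + 2 ≤ s := by linarith
  have hch2 : |ψ (s + δ) - ψ s| ≤ ε * (|δ| + 2) := by
    rcases le_or_gt 0 δ with h | h
    · have := hXc s (s + δ) (by linarith) (by linarith)
      rw [abs_of_nonneg h]
      rwa [show s + δ - s = δ by ring] at this
    · have hbase : Xc ≤ s + δ := by linarith
      have := hXc (s + δ) s hbase (by linarith)
      rw [abs_sub_comm, abs_of_neg h]
      rwa [show s - (s + δ) = -δ by ring] at this
  have hch2' : |ψ (s + δ) - ψ s| ≤ 4 * ε := by nlinarith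
  have hfinal : |ψ (z - ψ z) - ψ z| ≤ 8 * ε := by
    rw [← hsδ]
    have h := abs_sub_le (ψ (s + δ)) (ψ s) (ψ z)
    rw [abs_sub_comm (ψ s) (ψ z)] at h
    linarith [hch2', hψzs]
  rw [Real.dist_eq, sub_zero]
  calc |ψ (z - ψ z) - ψ z| ≤ 8 * ε := hfinal
    _ ≤ 8 * (η / 9) := by linarith
    _ < η := by linarith

/-- If `f` is slowly varying and `f(t·f(t)) ∼ f(t)`, then `f(t/f(t)) ∼ f(t)`, and
`(f, 1/f)` is a de Bruijn conjugate pair. -/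
theorem stmt_18
    (f : ℝ → ℝ) (hfpos : ∀ t > 0, 0 < f t) (hfmeas : Measurable f)
    (hslow : ∀ c > 0, Tendsto (fun t : ℝ => f (c * t) / f t) atTop (nhds 1))
    (hfix : Tendsto (fun t : ℝ => f (t * f t) / f t) atTop (nhds 1)) :
    Tendsto (fun t : ℝ => f (t / f t) / f t) atTop (nhds 1) ∧
      (∀ c > 0, Tendsto (fun t : ℝ => (f (c * t))⁻¹ / (f t)⁻¹) atTop (nhds 1)) ∧
      Tendsto (fun t : ℝ => f t * (f (t * f t))⁻¹) atTop (nhds 1) ∧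
      Tendsto (fun t : ℝ => (f t)⁻¹ * f (t * (f t)⁻¹)) atTop (nhds 1) := by
  have hpos : ∀ x : ℝ, 0 < f (Real.exp x) := fun x => hfpos _ (Real.exp_pos x)
  set ψ : ℝ → ℝ := fun x => Real.log (f (Real.exp x)) with hψ
  have hψmeas : Measurable ψ := Real.measurable_log.comp (hfmeas.comp Real.measurable_exp)
  have hlog : Tendsto Real.log (nhds 1) (nhds 0) := by
    simpa using (Real.continuousAt_log one_ne_zero).tendsto
  have hA : ∀ a : ℝ, Tendsto (fun x => ψ (x + a) - ψ x) atTop (nhds 0) := by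
    intro a
    have h1 : Tendsto (fun t : ℝ => f (Real.exp a * t) / f t) atTop (nhds 1) :=
      hslow _ (Real.exp_pos a)
    have h3 : Tendsto (fun x : ℝ =>
        Real.log (f (Real.exp a * Real.exp x) / f (Real.exp x))) atTop (nhds 0) :=
      hlog.comp (h1.comp Real.tendsto_exp_atTop)
    refine h3.congr (fun x => ?_)
    rw [← Real.exp_add, add_comm a x]
    exact Real.log_div (hpos _).ne' (hpos _).ne'
  have hFixAdd : Tendsto (fun x => ψ (x + ψ x) - ψ x) atTop (nhds 0) := by
    have h3 : Tendsto (fun x : ℝ =>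
        Real.log (f (Real.exp x * f (Real.exp x)) / f (Real.exp x))) atTop (nhds 0) :=
      hlog.comp (hfix.comp Real.tendsto_exp_atTop)
    refine h3.congr (fun x => ?_)
    have harg : Real.exp x * f (Real.exp x) = Real.exp (x + ψ x) := by
      rw [Real.exp_add, hψ]
      simp [Real.exp_log (hpos x)]
    rw [harg]
    exact Real.log_div (hpos _).ne' (hpos _).ne'
  have main := main_additive ψ hψmeas hA hFixAdd
  have part1 : Tendsto (fun t : ℝ => f (t / f t) / f t) atTop (nhds 1) := by
    have h4 : Tendsto (fun t : ℝ =>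
        ψ (Real.log t - ψ (Real.log t)) - ψ (Real.log t)) atTop (nhds 0) :=
      main.comp Real.tendsto_log_atTop
    have h5 : Tendsto (fun t : ℝ =>
        Real.exp (ψ (Real.log t - ψ (Real.log t)) - ψ (Real.log t))) atTop (nhds 1) := by
      have := (Real.continuous_exp.continuousAt (x := (0:ℝ))).tendsto
      rw [Real.exp_zero] at this
      exact this.comp h4
    refine h5.congr' ?_
    filter_upwards [eventually_gt_atTop (0:ℝ)] with t ht
    have hft := hfpos t ht
    have hdiv : 0 < t / f t := div_pos ht hft
    have e1 : Real.exp (Real.log t) = t := Real.exp_log ht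
    have e2 : ψ (Real.log t) = Real.log (f t) := by rw [hψ]; simp [e1]
    have e3 : Real.log t - Real.log (f t) = Real.log (t / f t) :=
      (Real.log_div ht.ne' hft.ne').symm
    have e4 : ψ (Real.log (t / f t)) = Real.log (f (t / f t)) := by
      rw [hψ]; simp [Real.exp_log hdiv]
    rw [e2, e3, e4, Real.exp_sub, Real.exp_log (hfpos _ hdiv), Real.exp_log hft]
  refine ⟨part1, ?_, ?_, ?_⟩
  · intro c hc
    have h := (hslow c hc).inv₀ one_ne_zero
    rw [inv_one] at h
    refine h.congr (fun t => ?_)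
    rw [inv_div, div_eq_mul_inv, div_eq_mul_inv, inv_inv, mul_comm]
  · have h := hfix.inv₀ one_ne_zero
    rw [inv_one] at h
    refine h.congr (fun t => ?_)
    rw [inv_div, div_eq_mul_inv, mul_comm]
  · refine part1.congr (fun t => ?_)
    rw [← div_eq_mul_inv t (f t), ← inv_mul_eq_div]

end
end
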